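/- arXiv:2305.01962 — 2 statements merged into one kernel-verified Lean document; each statement's English description precedes it below -/
import Mathlib

section
/- For any two PMTA A₁ and A₂ over the same finite alphabet Σ, there exists a PMTA A over Σ with L(A) = L(A₁) ∪ L(A₂). -/
/-- Positions in a binary tree: finite words over `{0,1}`. -/
abbrev Pos : Type := List Bool

/-- Vectors of natural numbers of dimension `s`. -/
abbrev Vec (s : ℕ) : Type := Fin s → ℕ

/-- An infinite path: a sequence of positions starting at the root, each step
descending to a child. -/
def IsPath (π : ℕ → Pos) : Prop :=
  π 0 = [] ∧ ∀ i : ℕ, ∃ b : Bool, π (i + 1) = π i ++ [b]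

/-- The set of values occurring infinitely often in a sequence. -/
def infOcc {Q : Type*} (g : ℕ → Q) : Set Q :=
  {q | {n : ℕ | g n = q}.Infinite}

/-- A linear subset of `ℕ^s`. -/
def IsLinearSetVec {s : ℕ} (C : Set (Vec s)) : Prop :=
  ∃ (l : ℕ) (v₀ : Vec s) (v : Fin l → Vec s),
    C = {w | ∃ m : Fin l → ℕ, w = v₀ + ∑ i, m i • v i}

/-- A semilinear subset of `ℕ^s`: a finite union of linear sets. -/
def IsSemilinearSetVec {s : ℕ} (C : Set (Vec s)) : Prop :=
  ∃ (k : ℕ) (Cs : Fin k → Set (Vec s)),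
    (∀ i, IsLinearSetVec (Cs i)) ∧ C = ⋃ i, Cs i

/-- A Parikh-Muller tree automaton of dimension `s` over the alphabet `σ`.
Labels in `Σ × D` are modelled as pairs `(a, some d)` and labels in `Σ` as `(a, none)`. -/
structure PMTA (σ : Type) (s : ℕ) where
  /-- states -/
  Q : Type
  finQ : Finite Q
  /-- counting states -/
  QP : Set Q
  /-- Muller states -/
  Qω : Set Q
  hdisj : Disjoint QP Qω
  hcover : QP ∪ Qω = Set.univ
  /-- initial state -/
  qI : Q
  /-- the finite set of counter increments -/
  D : Set (Vec s)
  hD : D.Finite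
  /-- counting transitions -/
  ΔP : Set (Q × (σ × Vec s) × Q × Q)
  /-- Muller transitions -/
  Δω : Set (Q × σ × Q × Q)
  hΔP : ∀ t ∈ ΔP, t.1 ∈ QP ∪ {qI} ∧ t.2.1.2 ∈ D
  hΔω : ∀ t ∈ Δω, t.1 ∈ Qω ∪ {qI} ∧ t.2.2.1 ∈ Qω ∧ t.2.2.2 ∈ Qω
  /-- the Muller acceptance family -/
  F : Set (Set Q)
  hF : ∀ X ∈ F, X ⊆ Qω
  /-- the semilinear Parikh constraint -/
  C : Set (Vec s)
  hC : IsSemilinearSetVec C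

namespace PMTA

variable {σ : Type} {s : ℕ}

/-- A run of a PMTA on a tree `ζ` over `(Σ × D) ∪ Σ`. -/
def IsRun (A : PMTA σ s) (ζ : Pos → σ × Option (Vec s)) (κ : Pos → A.Q) : Prop :=
  κ [] = A.qI ∧
  (∀ (ρ : Pos) (d : Vec s), (ζ ρ).2 = some d →
      (κ ρ, ((ζ ρ).1, d), κ (ρ ++ [false]), κ (ρ ++ [true])) ∈ A.ΔP) ∧
  (∀ ρ : Pos, (ζ ρ).2 = none →
      (κ ρ, (ζ ρ).1, κ (ρ ++ [false]), κ (ρ ++ [true])) ∈ A.Δω)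

/-- The positions of `ζ` carrying a label from `Σ × D`. -/
def cntPos (ζ : Pos → σ × Option (Vec s)) : Set Pos := {ρ | (ζ ρ).2 ≠ none}

/-- The extended Parikh map: the sum of all `D`-components occurring in `ζ`. -/
noncomputable def parikh (ζ : Pos → σ × Option (Vec s)) : Vec s :=
  ∑ᶠ ρ : Pos, ((ζ ρ).2.getD 0)

/-- An accepting run: the counting part is finite, the Parikh constraint is satisfied
whenever some counting position exists, all counter increments stem from `D`,
and every infinite path satisfies the Muller condition. -/
def IsAcceptingRun (A : PMTA σ s) (ζ : Pos → σ × Option (Vec s)) (κ : Pos → A.Q) : Prop :=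
  A.IsRun ζ κ ∧ (cntPos ζ).Finite ∧
  ((cntPos ζ).Nonempty → parikh ζ ∈ A.C) ∧
  (∀ (ρ : Pos) (d : Vec s), (ζ ρ).2 = some d → d ∈ A.D) ∧
  ∀ π : ℕ → Pos, IsPath π → infOcc (fun i => κ (π i)) ∈ A.F

/-- The language of a PMTA: all `Σ`-projections of trees admitting an accepting run. -/
def Language (A : PMTA σ s) : Set (Pos → σ) :=
  {ξ | ∃ (ζ : Pos → σ × Option (Vec s)) (κ : Pos → A.Q),
      (∀ ρ : Pos, (ζ ρ).1 = ξ ρ) ∧ A.IsAcceptingRun ζ κ}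

end PMTA

/-- A tree language is PMTA-recognizable if it is the language of some PMTA
(of some dimension). -/
def PMTARecognizable {σ : Type} (L : Set (Pos → σ)) : Prop :=
  ∃ (s : ℕ) (A : PMTA σ s), A.Language = L

/-! ### Auxiliary lemmas -/

section InfOcc

variable {Q R : Type*}

lemma infOcc_nonempty [Finite Q] (g : ℕ → Q) : (infOcc g).Nonempty := by
  by_contra h
  rw [Set.not_nonempty_iff_eq_empty] at h
  have hfin : ∀ q : Q, {n : ℕ | g n = q}.Finite := by
    intro q
    by_contra hq
    have : q ∈ infOcc g := hq
    simp [h] at this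
  have : (Set.univ : Set ℕ).Finite := by
    have : (Set.univ : Set ℕ) = ⋃ q : Q, {n : ℕ | g n = q} := by
      ext n; simp
    rw [this]
    exact Set.finite_iUnion hfin
  exact Set.infinite_univ this

lemma infOcc_congr {f g : ℕ → Q} (N : ℕ) (h : ∀ n, N ≤ n → f n = g n) :
    infOcc f = infOcc g := by
  have key : ∀ (f g : ℕ → Q), (∀ n, N ≤ n → f n = g n) → infOcc f ⊆ infOcc g := by
    intro f g h q hq
    have : {n : ℕ | f n = q} ⊆ {n : ℕ | g n = q} ∪ {n : ℕ | n < N} := by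
      intro n hn
      rcases lt_or_ge n N with hn' | hn'
      · exact Or.inr hn'
      · exact Or.inl (by simpa [← h n hn'] using hn)
    rcases Set.infinite_union.1 (hq.mono this) with h1 | h1
    · exact h1
    · exact absurd h1 (Set.finite_lt_nat N).not_infinite
  exact le_antisymm (key f g h) (key g f fun n hn => (h n hn).symm)

lemma infOcc_comp_injective {e : Q → R} (he : Function.Injective e) (g : ℕ → Q) :
    infOcc (fun n => e (g n)) = e '' infOcc g := by
  ext r
  constructor
  · intro hr
    obtain ⟨n, hn⟩ := hr.nonempty
    have hrg : r = e (g n) := by simpa using hn.symm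
    refine ⟨g n, ?_, hrg.symm⟩
    have : {m : ℕ | e (g m) = r} = {m : ℕ | g m = g n} := by
      ext m; simp [hrg, he.eq_iff]
    simpa [infOcc, ← this] using hr
  · rintro ⟨q, hq, rfl⟩
    have : {m : ℕ | e (g m) = e q} = {m : ℕ | g m = q} := by
      ext m; simp [he.eq_iff]
    simpa [infOcc, this] using hq

end InfOcc

lemma isPath_length {π : ℕ → Pos} (h : IsPath π) : ∀ n, (π n).length = n := by
  intro n
  induction n with
  | zero => simp [h.1]
  | succ n ih => obtain ⟨b, hb⟩ := h.2 n; simp [hb, ih]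

lemma isPath_injective {π : ℕ → Pos} (h : IsPath π) : Function.Injective π := by
  intro m n hmn
  have := isPath_length h m
  rw [hmn, isPath_length h n] at this
  omega

lemma exists_ge_not_mem_of_finite {S : Set ℕ} (h : S.Finite) :
    ∃ N, ∀ n, N ≤ n → n ∉ S := by
  obtain ⟨N, hN⟩ := h.bddAbove
  exact ⟨N + 1, fun n hn hmem => by have := hN hmem; omega⟩

lemma pos_ne_nil_decomp {ρ : Pos} (h : ρ ≠ []) : ∃ ρ' b, ρ = ρ' ++ [b] :=
  ⟨ρ.dropLast, ρ.getLast h, (List.dropLast_append_getLast h).symm⟩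

lemma prod4_eq_aux {α β γ δ : Type*} {a a' : α} {b b' : β} {c c' : γ} {d d' : δ}
    (h : (a, b, c, d) = (a', b', c', d')) : a = a' ∧ b = b' ∧ c = c' ∧ d = d' := by
  simp_all

lemma prod5_eq_aux {α β β' γ δ : Type*} {a a' : α} {b b' : β} {e e' : β'} {c c' : γ} {d d' : δ}
    (h : (a, (b, e), c, d) = (a', (b', e'), c', d')) :
    a = a' ∧ (b = b' ∧ e = e') ∧ c = c' ∧ d = d' := by
  simp_all

section Semilinear

variable {s s' : ℕ}

lemma IsLinearSetVec.pushed (f : Vec s →+ Vec s') (tg : Vec s') {C : Set (Vec s)}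
    (h : IsLinearSetVec C) :
    IsLinearSetVec {x | ∃ v t, v ∈ C ∧ 1 ≤ t ∧ x = f v + t • tg} := by
  obtain ⟨l, v₀, v, rfl⟩ := h
  refine ⟨l + 1, f v₀ + tg, Fin.snoc (fun i => f (v i)) tg, ?_⟩
  ext x
  constructor
  · rintro ⟨v', t, ⟨m, rfl⟩, ht, rfl⟩
    obtain ⟨k, rfl⟩ : ∃ k, t = k + 1 := ⟨t - 1, by omega⟩
    refine ⟨Fin.snoc m k, ?_⟩
    rw [Fin.sum_univ_castSucc]
    simp only [Fin.snoc_castSucc, Fin.snoc_last]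
    rw [map_add, map_sum]
    simp only [map_nsmul]
    rw [succ_nsmul]
    abel
  · rintro ⟨m, rfl⟩
    refine ⟨v₀ + ∑ i : Fin l, m i.castSucc • v i, m (Fin.last l) + 1, ⟨_, rfl⟩, by omega, ?_⟩
    rw [Fin.sum_univ_castSucc]
    simp only [Fin.snoc_castSucc, Fin.snoc_last]
    rw [map_add, map_sum]
    simp only [map_nsmul]
    rw [succ_nsmul]
    abel

lemma IsSemilinearSetVec.pushed (f : Vec s →+ Vec s') (tg : Vec s') {C : Set (Vec s)}
    (h : IsSemilinearSetVec C) :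
    IsSemilinearSetVec {x | ∃ v t, v ∈ C ∧ 1 ≤ t ∧ x = f v + t • tg} := by
  obtain ⟨k, Cs, hlin, rfl⟩ := h
  refine ⟨k, fun i => {x | ∃ v t, v ∈ Cs i ∧ 1 ≤ t ∧ x = f v + t • tg},
    fun i => (hlin i).pushed f tg, ?_⟩
  ext x
  simp only [Set.mem_setOf_eq, Set.mem_iUnion]
  constructor
  · rintro ⟨v, t, hv, ht, rfl⟩
    obtain ⟨i, hi⟩ := hv
    exact ⟨i, v, t, hi, ht, rfl⟩
  · rintro ⟨i, v, t, hv, ht, rfl⟩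
    exact ⟨v, t, ⟨i, hv⟩, ht, rfl⟩

lemma IsSemilinearSetVec.union {C C' : Set (Vec s)} (h : IsSemilinearSetVec C)
    (h' : IsSemilinearSetVec C') : IsSemilinearSetVec (C ∪ C') := by
  obtain ⟨k, Cs, hlin, rfl⟩ := h
  obtain ⟨k', Cs', hlin', rfl⟩ := h'
  refine ⟨k + k', fun i => if h : (i : ℕ) < k then Cs ⟨i, h⟩ else Cs' ⟨i - k, by omega⟩, ?_, ?_⟩
  · intro i
    by_cases h : (i : ℕ) < k
    · simpa [h] using hlin _
    · simpa [h] using hlin' _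
  · ext x
    simp only [Set.mem_union, Set.mem_iUnion]
    constructor
    · rintro (⟨i, hi⟩ | ⟨i, hi⟩)
      · exact ⟨⟨i, by omega⟩, by simpa [i.isLt] using hi⟩
      · refine ⟨⟨k + i, by omega⟩, ?_⟩
        have : ¬ (k + (i : ℕ) < k) := by omega
        simpa [this] using hi
    · rintro ⟨i, hi⟩
      by_cases h : (i : ℕ) < k
      · exact Or.inl ⟨⟨i, h⟩, by simpa [h] using hi⟩
      · exact Or.inr ⟨⟨(i : ℕ) - k, by omega⟩, by simpa [h] using hi⟩

end Semilinear
section UnionConstruction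

variable {σ : Type} {sF : Bool → ℕ}

/-- Ambient dimension for the union automaton. -/
abbrev DS (sF : Bool → ℕ) : ℕ := sF true + sF false + 2

/-- Offset of side `b` in the ambient coordinates. -/
def off (sF : Bool → ℕ) (b : Bool) : ℕ := bif b then 0 else sF true

lemma off_add_le (b : Bool) : off sF b + sF b ≤ sF true + sF false := by
  cases b <;> simp [off] <;> omega

/-- Padding of a side-`b` vector into the ambient space. -/
def padF (sF : Bool → ℕ) (b : Bool) : Vec (sF b) →+ Vec (DS sF) where
  toFun x := fun i =>
    if h : off sF b ≤ (i : ℕ) ∧ (i : ℕ) - off sF b < sF b then x ⟨(i : ℕ) - off sF b, h.2⟩ else 0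
  map_zero' := by
    funext i
    by_cases h : off sF b ≤ (i : ℕ) ∧ (i : ℕ) - off sF b < sF b <;> simp [h]
  map_add' x y := by
    funext i
    by_cases h : off sF b ≤ (i : ℕ) ∧ (i : ℕ) - off sF b < sF b <;> simp [h]

/-- The tag vector of side `b`. -/
def tgF (sF : Bool → ℕ) (b : Bool) : Vec (DS sF) :=
  fun i => if (i : ℕ) = sF true + sF false + (bif b then 0 else 1) then 1 else 0

/-- Tag coordinate of side `b`. -/
def tcoord (sF : Bool → ℕ) (b : Bool) : Fin (DS sF) :=
  ⟨sF true + sF false + (bif b then 0 else 1), by cases b <;> simp⟩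

/-- Embedding coordinate of side `b`. -/
def ecoord (sF : Bool → ℕ) (b : Bool) (j : Fin (sF b)) : Fin (DS sF) :=
  ⟨off sF b + (j : ℕ), by
    have h1 := off_add_le (sF := sF) b
    have h2 := j.isLt
    show _ < sF true + sF false + 2
    omega⟩

lemma padF_tcoord (b b' : Bool) (x : Vec (sF b)) : padF sF b x (tcoord sF b') = 0 := by
  have h1 := off_add_le (sF := sF) b
  show dite _ _ _ = 0
  rw [dif_neg]
  simp only [tcoord]
  cases b' <;> simp <;> omega

lemma tgF_tcoord (b b' : Bool) : tgF sF b (tcoord sF b') = if b = b' then 1 else 0 := by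
  cases b <;> cases b' <;> simp [tgF, tcoord]

lemma padF_ecoord (b : Bool) (x : Vec (sF b)) (j : Fin (sF b)) :
    padF sF b x (ecoord sF b j) = x j := by
  show dite _ _ _ = x j
  have hj := j.isLt
  have hval : ((ecoord sF b j : Fin (DS sF)) : ℕ) = off sF b + (j : ℕ) := rfl
  rw [dif_pos ⟨by rw [hval]; omega, by rw [hval]; omega⟩]
  congr 1
  exact Fin.ext (by rw [Fin.val_mk, hval]; omega)

lemma tgF_ecoord (b b' : Bool) (j : Fin (sF b')) : tgF sF b (ecoord sF b' j) = 0 := by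
  have h1 := off_add_le (sF := sF) b'
  have hj := j.isLt
  simp only [tgF, ecoord]
  refine if_neg ?_
  cases b <;> simp <;> omega

lemma side_eq_of_pad_tag {b b' : Bool} {u : Vec (sF b)} {v : Vec (sF b')} {t t' : ℕ}
    (h : padF sF b u + t • tgF sF b = padF sF b' v + t' • tgF sF b') (ht : 1 ≤ t) : b = b' := by
  by_contra hbb
  have h2 := congrFun h (tcoord sF b)
  rw [Pi.add_apply, Pi.add_apply, Pi.smul_apply, Pi.smul_apply, padF_tcoord, padF_tcoord,
    tgF_tcoord, tgF_tcoord, if_pos rfl, if_neg (fun hh => hbb hh.symm)] at h2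
  simp only [smul_eq_mul, mul_one, mul_zero, zero_add, add_zero] at h2
  omega

lemma vec_eq_of_pad_tag {b : Bool} {u v : Vec (sF b)} {t t' : ℕ}
    (h : padF sF b u + t • tgF sF b = padF sF b v + t' • tgF sF b) : u = v := by
  funext j
  have := congrFun h (ecoord sF b j)
  simpa [padF_ecoord, tgF_ecoord] using this

lemma tag_eq_of_pad_tag {b : Bool} {u v : Vec (sF b)} {t t' : ℕ}
    (h : padF sF b u + t • tgF sF b = padF sF b v + t' • tgF sF b) : t = t' := by
  have h2 := congrFun h (tcoord sF b)
  rw [Pi.add_apply, Pi.add_apply, Pi.smul_apply, Pi.smul_apply, padF_tcoord, padF_tcoord,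
    tgF_tcoord] at h2
  simpa using h2

variable (AF : ∀ b, PMTA σ (sF b))

/-- State space of the union automaton. -/
abbrev UQ (AF : ∀ b, PMTA σ (sF b)) : Type := Option ((Σ b, (AF b).Q) × Bool)

/-- Embedding of side states. -/
def emb (b : Bool) (q : (AF b).Q) (m : Bool) : UQ AF := some (⟨b, q⟩, m)

lemma emb_injective (b : Bool) (m : Bool) : Function.Injective (fun q => emb AF b q m) := by
  intro q q' h
  simpa [emb] using h

/-- The increment associated with a side-`b` optional increment. -/
def incr (b : Bool) (o : Option (Vec (sF b))) : Vec (DS sF) :=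
  padF sF b (o.getD 0) + tgF sF b

/-- Valid transition data of side `b` (counting if `o = some d`, Muller otherwise). -/
def okTrans (b : Bool) (q : (AF b).Q) (a : σ) (q' q'' : (AF b).Q)
    (o : Option (Vec (sF b))) : Prop :=
  match o with
  | some d => (q, (a, d), q', q'') ∈ (AF b).ΔP
  | none => (q, a, q', q'') ∈ (AF b).Δω

/-- Allowed sources in the union automaton for a side-`b` state `q` with mode `m`. -/
def srcOK (b : Bool) (q : (AF b).Q) (m : Bool) (S : UQ AF) : Prop :=
  S = emb AF b q m ∨ (q = (AF b).qI ∧ S = none)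

/-- Counting transitions of the union automaton. -/
def UΔP : Set (UQ AF × (σ × Vec (DS sF)) × UQ AF × UQ AF) :=
  {t | ∃ (b : Bool) (q : (AF b).Q) (a : σ) (q' q'' : (AF b).Q) (m' m'' : Bool) (S : UQ AF) (o : Option (Vec (sF b))), okTrans AF b q a q' q'' o ∧
    (∀ d ∈ o, d ∈ (AF b).D) ∧ srcOK AF b q true S ∧
    t = (S, (a, incr b o), emb AF b q' m', emb AF b q'' m'')}

/-- Muller transitions of the union automaton. -/
def UΔω : Set (UQ AF × σ × UQ AF × UQ AF) :=
  {t | ∃ (b : Bool) (q : (AF b).Q) (a : σ) (q' q'' : (AF b).Q) (S : UQ AF), (q, a, q', q'') ∈ (AF b).Δω ∧ srcOK AF b q false S ∧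
    t = (S, a, emb AF b q' false, emb AF b q'' false)}

/-- The union automaton. -/
def BU : PMTA σ (DS sF) where
  Q := UQ AF
  finQ := by
    haveI : ∀ b, Finite (AF b).Q := fun b => (AF b).finQ
    haveI : Finite ((Σ b, (AF b).Q) × Bool) := by infer_instance
    exact Finite.of_equiv _ (Equiv.optionEquivSumPUnit.{0, 0} _).symm
  QP := {x | ∀ p m, x = some (p, m) → m = true}
  Qω := {x | ∃ p, x = some (p, false)}
  hdisj := by
    rw [Set.disjoint_left]
    rintro x hx ⟨p, rfl⟩
    simpa using hx p false rfl
  hcover := by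
    ext x
    simp only [Set.mem_union, Set.mem_setOf_eq, Set.mem_univ, iff_true]
    match x with
    | none => exact Or.inl (by simp)
    | some (p, true) => exact Or.inl (by simp)
    | some (p, false) => exact Or.inr ⟨p, rfl⟩
  qI := none
  D := {v | ∃ b o, (∀ d ∈ o, d ∈ (AF b).D) ∧ v = incr b o}
  hD := by
    have : {v | ∃ b o, (∀ d ∈ o, d ∈ (AF b).D) ∧ v = incr b o} =
        ⋃ b, (incr (sF := sF) b) '' (insert none (some '' (AF b).D)) := by
      ext v
      simp only [Set.mem_setOf_eq, Set.mem_iUnion, Set.mem_image, Set.mem_insert_iff]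
      constructor
      · rintro ⟨b, o, ho, rfl⟩
        refine ⟨b, o, ?_, rfl⟩
        match o with
        | none => exact Or.inl rfl
        | some d => exact Or.inr ⟨d, ho d rfl, rfl⟩
      · rintro ⟨b, o, ho, rfl⟩
        refine ⟨b, o, ?_, rfl⟩
        rcases ho with rfl | ⟨d, hd, rfl⟩
        · simp
        · simpa using hd
    rw [this]
    exact Set.finite_iUnion fun b => (((AF b).hD.image some).insert none).image _
  ΔP := UΔP AF
  Δω := UΔω AF
  hΔP := by
    rintro t ⟨b, q, a, q', q'', m', m'', S, o, hok, hDo, hsrc, rfl⟩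
    constructor
    · rcases hsrc with rfl | ⟨_, rfl⟩
      · refine Or.inl ?_
        intro p m h
        simp only [emb, Option.some.injEq, Prod.mk.injEq] at h
        exact h.2.symm
      · exact Or.inr rfl
    · exact ⟨b, o, hDo, rfl⟩
  hΔω := by
    rintro t ⟨b, q, a, q', q'', S, hok, hsrc, rfl⟩
    refine ⟨?_, ⟨⟨b, q'⟩, rfl⟩, ⟨⟨b, q''⟩, rfl⟩⟩
    rcases hsrc with rfl | ⟨_, rfl⟩
    · exact Or.inl ⟨_, rfl⟩
    · exact Or.inr rfl
  F := {Y | ∃ b X, X ∈ (AF b).F ∧ Y = (fun q => emb AF b q false) '' X}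
  hF := by
    rintro Y ⟨b, X, hX, rfl⟩ y ⟨q, hq, rfl⟩
    exact ⟨⟨b, q⟩, rfl⟩
  C := {x | ∃ (b : Bool) (v : Vec (sF b)) (t : ℕ), v ∈ (AF b).C ∧ 1 ≤ t ∧ x = padF sF b v + t • tgF sF b}
  hC := by
    have h1 : {x | ∃ (b : Bool) (v : Vec (sF b)) (t : ℕ), v ∈ (AF b).C ∧ 1 ≤ t ∧ x = padF sF b v + t • tgF sF b} =
        {x | ∃ v t, v ∈ (AF true).C ∧ 1 ≤ t ∧ x = padF sF true v + t • tgF sF true} ∪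
        {x | ∃ v t, v ∈ (AF false).C ∧ 1 ≤ t ∧ x = padF sF false v + t • tgF sF false} := by
      ext x
      simp only [Set.mem_setOf_eq, Set.mem_union]
      constructor
      · rintro ⟨b, v, t, h⟩
        cases b
        · exact Or.inr ⟨v, t, h⟩
        · exact Or.inl ⟨v, t, h⟩
      · rintro (⟨v, t, h⟩ | ⟨v, t, h⟩)
        · exact ⟨true, v, t, h⟩
        · exact ⟨false, v, t, h⟩
    rw [h1]
    exact ((AF true).hC.pushed _ _).union ((AF false).hC.pushed _ _)

end UnionConstruction
section Complete

variable {σ : Type} {sF : Bool → ℕ} (AF : ∀ b, PMTA σ (sF b))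

/-- The annotated tree used in the completeness direction. -/
def cζ (b : Bool) (n : ℕ) (ξ : Pos → σ) (ζ₁ : Pos → σ × Option (Vec (sF b))) :
    Pos → σ × Option (Vec (DS sF)) :=
  fun ρ => (ξ ρ, if ρ.length < n then some (incr (sF := sF) b (ζ₁ ρ).2) else none)

/-- The run used in the completeness direction. -/
def cκ (b : Bool) (n : ℕ) (κ₁ : Pos → (AF b).Q) : Pos → UQ AF :=
  fun ρ => if ρ = [] then none else emb AF b (κ₁ ρ) (decide (ρ.length < n))

lemma BU_language_le (b : Bool) : (AF b).Language ⊆ (BU AF).Language := by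
  rintro ξ ⟨ζ₁, κ₁, hproj, ⟨hI, hP, hω⟩, hfin, hCc, hDc, hMul⟩
  obtain ⟨n, hn1, hn2⟩ : ∃ n, (∀ ρ ∈ PMTA.cntPos ζ₁, ρ.length < n) ∧
      (0 < n → (PMTA.cntPos ζ₁).Nonempty) := by
    by_cases hne : (PMTA.cntPos ζ₁).Nonempty
    · obtain ⟨N, hN⟩ := (hfin.image List.length).bddAbove
      refine ⟨N + 1, fun ρ hρ => ?_, fun _ => hne⟩
      have := hN (Set.mem_image_of_mem List.length hρ)
      omega
    · exact ⟨0, fun ρ hρ => absurd ⟨ρ, hρ⟩ hne, by omega⟩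
  have hζnone : ∀ ρ : Pos, ¬ (ρ.length < n) → (ζ₁ ρ).2 = none := by
    intro ρ h
    by_contra hc
    exact h (hn1 ρ hc)
  have hκne : ∀ ρ : Pos, ρ ≠ [] → cκ AF b n κ₁ ρ = emb AF b (κ₁ ρ) (decide (ρ.length < n)) :=
    fun ρ h => if_neg h
  have happ : ∀ (ρ : Pos) (c : Bool), cκ AF b n κ₁ (ρ ++ [c]) =
      emb AF b (κ₁ (ρ ++ [c])) (decide ((ρ ++ [c]).length < n)) :=
    fun ρ c => hκne _ (by simp)
  have hsrc : ∀ ρ : Pos, ∀ m : Bool, (decide (ρ.length < n)) = m →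
      srcOK AF b (κ₁ ρ) m (cκ AF b n κ₁ ρ) := by
    intro ρ m hm
    by_cases hρ : ρ = []
    · subst hρ
      exact Or.inr ⟨hI, if_pos rfl⟩
    · rw [hκne ρ hρ, hm]
      exact Or.inl rfl
  have hset : PMTA.cntPos (cζ b n ξ ζ₁) = {ρ : Pos | ρ.length < n} := by
    ext ρ
    by_cases h : ρ.length < n <;> simp [PMTA.cntPos, cζ, h]
  refine ⟨cζ b n ξ ζ₁, cκ AF b n κ₁, fun ρ => rfl, ⟨if_pos rfl, ?_, ?_⟩, ?_, ?_, ?_, ?_⟩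
  · -- counting transitions
    intro ρ d hd
    have hlen : ρ.length < n := by
      by_contra h
      simp only [cζ, if_neg h] at hd
      exact nomatch hd
    have hd' : d = incr (sF := sF) b (ζ₁ ρ).2 := by
      simp only [cζ, if_pos hlen] at hd
      exact (Option.some.injEq _ _ ▸ hd).symm ▸ rfl
    show _ ∈ UΔP AF
    refine ⟨b, κ₁ ρ, ξ ρ, κ₁ (ρ ++ [false]), κ₁ (ρ ++ [true]),
      decide ((ρ ++ [false]).length < n), decide ((ρ ++ [true]).length < n),
      cκ AF b n κ₁ ρ, (ζ₁ ρ).2, ?_, ?_, hsrc ρ true (decide_eq_true hlen), ?_⟩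
    · cases h1 : (ζ₁ ρ).2 with
      | some d₁ =>
        have := hP ρ d₁ h1
        rw [hproj ρ] at this
        exact this
      | none =>
        have := hω ρ h1
        rw [hproj ρ] at this
        exact this
    · intro d' hd'
      exact hDc ρ d' (Option.mem_def.mp hd')
    · have h1 : (cζ b n ξ ζ₁ ρ).1 = ξ ρ := rfl
      rw [happ ρ false, happ ρ true, hd', h1]
      rfl
  · -- Muller transitions
    intro ρ hnone
    have hlen : ¬ (ρ.length < n) := by
      intro h
      simp only [cζ, if_pos h] at hnone
      exact nomatch hnone
    have h1 : (ζ₁ ρ).2 = none := hζnone ρ hlen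
    show _ ∈ UΔω AF
    refine ⟨b, κ₁ ρ, ξ ρ, κ₁ (ρ ++ [false]), κ₁ (ρ ++ [true]), cκ AF b n κ₁ ρ, ?_, ?_, ?_⟩
    · have := hω ρ h1
      rw [hproj ρ] at this
      exact this
    · exact hsrc ρ false (decide_eq_false hlen)
    · have h2 : (cζ b n ξ ζ₁ ρ).1 = ξ ρ := rfl
      have hf : ∀ c : Bool, ¬ ((ρ ++ [c]).length < n) := by
        intro c
        simp only [List.length_append, List.length_cons, List.length_nil]
        omega
      rw [happ ρ false, happ ρ true, h2, decide_eq_false (hf false), decide_eq_false (hf true)]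
      rfl
  · -- finiteness
    rw [hset]
    exact List.finite_length_lt Bool n
  · -- Parikh condition
    intro hne
    have hpos : 0 < n := by
      obtain ⟨ρ, hρ⟩ := hne
      rw [hset] at hρ
      have : ρ.length < n := hρ
      omega
    have hne₁ := hn2 hpos
    set R : Finset Pos := (List.finite_length_lt Bool n).toFinset with hR
    have hmemR : ∀ ρ : Pos, ρ ∈ R ↔ ρ.length < n := by
      intro ρ
      rw [hR, Set.Finite.mem_toFinset]
      rfl
    have h1 : PMTA.parikh (cζ b n ξ ζ₁) = ∑ ρ ∈ R, ((cζ b n ξ ζ₁ ρ).2.getD 0) := by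
      refine finsum_eq_sum_of_support_subset _ ?_
      intro ρ hρ
      have : (cζ b n ξ ζ₁ ρ).2.getD 0 ≠ 0 := hρ
      by_contra hmem
      rw [Finset.mem_coe, hmemR] at hmem
      simp only [cζ, if_neg hmem] at this
      exact this rfl
    have h2 : ∀ ρ ∈ R, (cζ b n ξ ζ₁ ρ).2.getD 0 =
        padF sF b ((ζ₁ ρ).2.getD 0) + tgF sF b := by
      intro ρ hρ
      rw [hmemR] at hρ
      simp only [cζ, if_pos hρ, Option.getD_some, incr]
    have h3 : ∑ ρ ∈ R, (ζ₁ ρ).2.getD 0 = PMTA.parikh ζ₁ := by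
      refine (finsum_eq_sum_of_support_subset _ ?_).symm
      intro ρ hρ
      have : (ζ₁ ρ).2.getD 0 ≠ 0 := hρ
      rw [Finset.mem_coe, hmemR]
      refine hn1 ρ ?_
      show (ζ₁ ρ).2 ≠ none
      intro hc
      rw [hc] at this
      exact this rfl
    have h4 : PMTA.parikh (cζ b n ξ ζ₁) = padF sF b (PMTA.parikh ζ₁) + R.card • tgF sF b := by
      rw [h1, Finset.sum_congr rfl h2, Finset.sum_add_distrib, ← map_sum, h3,
        Finset.sum_const]
    have hcard : 1 ≤ R.card := by
      refine Finset.card_pos.mpr ⟨[], ?_⟩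
      rw [hmemR]
      simpa using hpos
    exact ⟨b, PMTA.parikh ζ₁, R.card, hCc hne₁, hcard, h4⟩
  · -- increments in D
    intro ρ d hd
    have hlen : ρ.length < n := by
      by_contra h
      simp only [cζ, if_neg h] at hd
      exact nomatch hd
    have hd' : d = incr (sF := sF) b (ζ₁ ρ).2 := by
      simp only [cζ, if_pos hlen] at hd
      exact ((Option.some.injEq _ _).mp hd).symm
    exact ⟨b, (ζ₁ ρ).2, fun d' hd'' => hDc ρ d' (Option.mem_def.mp hd''), hd'⟩
  · -- Muller condition
    intro π hπ
    have hlen := isPath_length hπ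
    have hev : ∀ i, max n 1 ≤ i → cκ AF b n κ₁ (π i) = emb AF b (κ₁ (π i)) false := by
      intro i hi
      have h0 : π i ≠ [] := by
        intro h
        have := hlen i
        rw [h] at this
        simp at this
        omega
      have h1 : ¬ ((π i).length < n) := by
        rw [hlen i]
        omega
      rw [hκne _ h0, decide_eq_false h1]
    have := infOcc_congr (f := fun i => cκ AF b n κ₁ (π i))
      (g := fun i => emb AF b (κ₁ (π i)) false) (max n 1) hev
    erw [this, infOcc_comp_injective (emb_injective AF b false) (fun i => κ₁ (π i))]
    exact ⟨b, _, hMul π hπ, rfl⟩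

end Complete
section Sound

variable {σ : Type} {sF : Bool → ℕ} (AF : ∀ b, PMTA σ (sF b))

/-- Projection of a union state to a side-`b` state. -/
def projQ (b : Bool) (x : UQ AF) : (AF b).Q :=
  match x with
  | some (⟨b', q⟩, _) => if h : b' = b then h ▸ q else (AF b).qI
  | none => (AF b).qI

lemma projQ_emb (b : Bool) (q : (AF b).Q) (m : Bool) : projQ AF b (emb AF b q m) = q := by
  simp [projQ, emb]

lemma projQ_none (b : Bool) : projQ AF b none = (AF b).qI := rfl

/-- The reconstructed annotation in the soundness direction. -/
noncomputable def annO (b : Bool) (ζ : Pos → σ × Option (Vec (DS sF)))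
    (κ : Pos → UQ AF) (ρ : Pos) : Option (Vec (sF b)) := by
  classical
  exact if h : ∃ d₁, d₁ ∈ (AF b).D ∧ (ζ ρ).2 = some (incr (sF := sF) b (some d₁)) ∧
      (projQ AF b (κ ρ), ((ζ ρ).1, d₁), projQ AF b (κ (ρ ++ [false])),
        projQ AF b (κ (ρ ++ [true]))) ∈ (AF b).ΔP
    then some h.choose else none

lemma annO_some {b : Bool} {ζ : Pos → σ × Option (Vec (DS sF))} {κ : Pos → UQ AF}
    {ρ : Pos} {d₁ : Vec (sF b)} (h : annO AF b ζ κ ρ = some d₁) :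
    d₁ ∈ (AF b).D ∧ (ζ ρ).2 = some (incr (sF := sF) b (some d₁)) ∧
      (projQ AF b (κ ρ), ((ζ ρ).1, d₁), projQ AF b (κ (ρ ++ [false])),
        projQ AF b (κ (ρ ++ [true]))) ∈ (AF b).ΔP := by
  classical
  by_cases hc : ∃ d₁, d₁ ∈ (AF b).D ∧ (ζ ρ).2 = some (incr (sF := sF) b (some d₁)) ∧
      (projQ AF b (κ ρ), ((ζ ρ).1, d₁), projQ AF b (κ (ρ ++ [false])),
        projQ AF b (κ (ρ ++ [true]))) ∈ (AF b).ΔP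
  · rw [annO, dif_pos hc] at h
    obtain rfl : hc.choose = d₁ := Option.some.injEq _ _ ▸ h
    exact hc.choose_spec
  · rw [annO, dif_neg hc] at h
    exact nomatch h

lemma annO_none {b : Bool} {ζ : Pos → σ × Option (Vec (DS sF))} {κ : Pos → UQ AF}
    {ρ : Pos} (h : annO AF b ζ κ ρ = none) :
    ¬ ∃ d₁, d₁ ∈ (AF b).D ∧ (ζ ρ).2 = some (incr (sF := sF) b (some d₁)) ∧
      (projQ AF b (κ ρ), ((ζ ρ).1, d₁), projQ AF b (κ (ρ ++ [false])),
        projQ AF b (κ (ρ ++ [true]))) ∈ (AF b).ΔP := by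
  intro hc
  rw [annO, dif_pos hc] at h
  exact nomatch h

lemma BU_language_ge {ξ : Pos → σ} (hξ : ξ ∈ (BU AF).Language) :
    ∃ b, ξ ∈ (AF b).Language := by
  classical
  obtain ⟨ζ, κ, hproj, ⟨hI, hP, hω⟩, hfin, hCc, hDD, hMul⟩ := hξ
  -- the children of every transition carry a common side tag
  have hchild : ∀ ρ : Pos, ∃ b₀ : Bool,
      (∃ q m, κ (ρ ++ [false]) = emb AF b₀ q m) ∧
      (∃ q m, κ (ρ ++ [true]) = emb AF b₀ q m) ∧
      (∀ p mm, κ ρ = some (p, mm) → p.1 = b₀) := by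
    intro ρ
    cases hl : (ζ ρ).2 with
    | some d =>
      obtain ⟨b₀, q, a, q', q'', m', m'', S, o, hok, hDo, hsrc, heq⟩ := hP ρ d hl
      replace heq := prod5_eq_aux heq
      obtain ⟨hS, -, hc0, hc1⟩ := heq
      refine ⟨b₀, ⟨q', m', hc0⟩, ⟨q'', m'', hc1⟩, ?_⟩
      intro p mm hp
      rcases hsrc with hS' | ⟨-, hS'⟩
      · rw [hS, hS'] at hp
        have h2 : (⟨b₀, q⟩ : Σ b, (AF b).Q) = p :=
          congrArg (fun x : UQ AF => (x.getD (⟨b₀, q⟩, true)).1) hp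
        rw [← h2]
      · rw [hS, hS'] at hp
        exact nomatch hp
    | none =>
      obtain ⟨b₀, q, a, q', q'', S, hok, hsrc, heq⟩ := hω ρ hl
      replace heq := prod4_eq_aux heq
      obtain ⟨hS, -, hc0, hc1⟩ := heq
      refine ⟨b₀, ⟨q', false, hc0⟩, ⟨q'', false, hc1⟩, ?_⟩
      intro p mm hp
      rcases hsrc with hS' | ⟨-, hS'⟩
      · rw [hS, hS'] at hp
        have h2 : (⟨b₀, q⟩ : Σ b, (AF b).Q) = p :=
          congrArg (fun x : UQ AF => (x.getD (⟨b₀, q⟩, true)).1) hp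
        rw [← h2]
      · rw [hS, hS'] at hp
        exact nomatch hp
  obtain ⟨b, hb0, hb1, -⟩ := hchild []
  refine ⟨b, ?_⟩
  -- every non-root state is a side-`b` state
  have hcommit : ∀ ρ : Pos, ρ ≠ [] → ∃ q m, κ ρ = emb AF b q m := by
    intro ρ
    induction ρ using List.reverseRecOn with
    | nil => intro h; exact absurd rfl h
    | append_singleton ρ' c ih =>
      intro _
      by_cases h' : ρ' = []
      · subst h'
        cases c
        · exact hb0
        · exact hb1
      · obtain ⟨q, m, hq⟩ := ih h'
        obtain ⟨b₁, h1, h2, h3⟩ := hchild ρ'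
        have hbb : b₁ = b := (h3 ⟨b, q⟩ m hq).symm
        subst hbb
        cases c
        · exact h1
        · exact h2
  -- transition analysis at every position
  have hstep : ∀ ρ : Pos,
      ((ζ ρ).2 = none → (projQ AF b (κ ρ), (ζ ρ).1, projQ AF b (κ (ρ ++ [false])),
        projQ AF b (κ (ρ ++ [true]))) ∈ (AF b).Δω) ∧
      (∀ d, (ζ ρ).2 = some d →
        (∃ d₁, d₁ ∈ (AF b).D ∧ d = incr (sF := sF) b (some d₁) ∧
          (projQ AF b (κ ρ), ((ζ ρ).1, d₁), projQ AF b (κ (ρ ++ [false])),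
            projQ AF b (κ (ρ ++ [true]))) ∈ (AF b).ΔP) ∨
        (d = incr (sF := sF) b none ∧
          (projQ AF b (κ ρ), (ζ ρ).1, projQ AF b (κ (ρ ++ [false])),
            projQ AF b (κ (ρ ++ [true]))) ∈ (AF b).Δω)) := by
    intro ρ
    constructor
    · intro hl
      obtain ⟨b₀, q, a, q', q'', S, hok, hsrc, heq⟩ := hω ρ hl
      replace heq := prod4_eq_aux heq
      obtain ⟨hS, ha, hc0, hc1⟩ := heq
      have hbb : b₀ = b := by
        obtain ⟨q₂, m₂, hq₂⟩ := hcommit (ρ ++ [false]) (by simp)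
        have h2 := hq₂.symm.trans hc0
        exact (congrArg (fun x : UQ AF => (x.getD (⟨b₀, q'⟩, false)).1.1) h2).symm
      subst b₀
      have hsv : projQ AF b (κ ρ) = q := by
        rcases hsrc with hS' | ⟨hqI, hS'⟩
        · rw [hS, hS', projQ_emb]
        · rw [hS, hS', projQ_none, hqI]
      rw [hsv, hc0, hc1, projQ_emb, projQ_emb, ha]
      exact hok
    · intro d hl
      obtain ⟨b₀, q, a, q', q'', m', m'', S, o, hok, hDo, hsrc, heq⟩ := hP ρ d hl
      replace heq := prod5_eq_aux heq
      obtain ⟨hS, ⟨ha, hd⟩, hc0, hc1⟩ := heq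
      have hbb : b₀ = b := by
        obtain ⟨q₂, m₂, hq₂⟩ := hcommit (ρ ++ [false]) (by simp)
        have h2 := hq₂.symm.trans hc0
        exact (congrArg (fun x : UQ AF => (x.getD (⟨b₀, q'⟩, m')).1.1) h2).symm
      subst b₀
      have hsv : projQ AF b (κ ρ) = q := by
        rcases hsrc with hS' | ⟨hqI, hS'⟩
        · rw [hS, hS', projQ_emb]
        · rw [hS, hS', projQ_none, hqI]
      cases o with
      | some d₁ =>
        refine Or.inl ⟨d₁, hDo d₁ rfl, hd, ?_⟩
        rw [hsv, hc0, hc1, projQ_emb, projQ_emb, ha]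
        exact hok
      | none =>
        refine Or.inr ⟨hd, ?_⟩
        rw [hsv, hc0, hc1, projQ_emb, projQ_emb, ha]
        exact hok
  -- the reconstructed run and annotation
  refine ⟨fun ρ => ((ζ ρ).1, annO AF b ζ κ ρ), fun ρ => projQ AF b (κ ρ),
    fun ρ => hproj ρ, ⟨?_, ?_, ?_⟩, ?_, ?_, ?_, ?_⟩
  · show projQ AF b (κ []) = (AF b).qI
    rw [hI]
    rfl
  · -- counting transitions
    intro ρ d₁ h
    exact (annO_some AF h).2.2
  · -- Muller transitions
    intro ρ h
    have h' : annO AF b ζ κ ρ = none := h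
    cases hl : (ζ ρ).2 with
    | none => exact (hstep ρ).1 hl
    | some d =>
      rcases (hstep ρ).2 d hl with ⟨d₁, hD₁, hdeq, htu⟩ | ⟨-, htu⟩
      · exact absurd ⟨d₁, hD₁, by rw [hl, hdeq], htu⟩ (annO_none AF h')
      · exact htu
  · -- finiteness of counting positions
    refine hfin.subset ?_
    intro ρ hρ
    have hρ' : annO AF b ζ κ ρ ≠ none := hρ
    cases h : annO AF b ζ κ ρ with
    | none => exact absurd h hρ'
    | some d₁ =>
      have := (annO_some AF h).2.1
      show (ζ ρ).2 ≠ none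
      rw [this]
      exact fun hh => nomatch hh
  · -- Parikh condition
    intro hne'
    have hsub : PMTA.cntPos (fun ρ => ((ζ ρ).1, annO AF b ζ κ ρ)) ⊆ PMTA.cntPos ζ := by
      intro ρ hρ
      have hρ' : annO AF b ζ κ ρ ≠ none := hρ
      cases h : annO AF b ζ κ ρ with
      | none => exact absurd h hρ'
      | some d₁ =>
        have := (annO_some AF h).2.1
        show (ζ ρ).2 ≠ none
        rw [this]
        exact fun hh => nomatch hh
    have hne : (PMTA.cntPos ζ).Nonempty := hne'.mono hsub
    have hpt : ∀ ρ, (ζ ρ).2.getD 0 = padF sF b ((annO AF b ζ κ ρ).getD 0) +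
        (PMTA.cntPos ζ).indicator (fun _ => tgF sF b) ρ := by
      intro ρ
      cases hl : (ζ ρ).2 with
      | none =>
        have h1 : annO AF b ζ κ ρ = none := by
          cases h2 : annO AF b ζ κ ρ with
          | none => rfl
          | some d₁ =>
            have := (annO_some AF h2).2.1
            rw [hl] at this
            exact nomatch this
        have h2 : ρ ∉ PMTA.cntPos ζ := by simp [PMTA.cntPos, hl]
        rw [h1, Set.indicator_of_notMem h2]
        simp
      | some d =>
        have hmem : ρ ∈ PMTA.cntPos ζ := by simp [PMTA.cntPos, hl]
        rw [Set.indicator_of_mem hmem]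
        cases h2 : annO AF b ζ κ ρ with
        | some d₁ =>
          have he := (annO_some AF h2).2.1
          rw [hl] at he
          obtain rfl := Option.some.injEq _ _ ▸ he
          simp [incr]
        | none =>
          rcases (hstep ρ).2 d hl with ⟨d₁, hD₁, hdeq, htu⟩ | ⟨hdeq, -⟩
          · exact absurd ⟨d₁, hD₁, by rw [hl, hdeq], htu⟩ (annO_none AF h2)
          · simpa [incr] using hdeq
    set T : Finset Pos := hfin.toFinset with hT
    have hmemT : ∀ ρ : Pos, ρ ∈ T ↔ ρ ∈ PMTA.cntPos ζ := fun ρ => Set.Finite.mem_toFinset _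
    have h1 : PMTA.parikh ζ = ∑ ρ ∈ T, (ζ ρ).2.getD 0 := by
      refine finsum_eq_sum_of_support_subset _ ?_
      intro ρ hρ
      have hρ' : (ζ ρ).2.getD 0 ≠ 0 := hρ
      rw [Finset.mem_coe, hmemT]
      show (ζ ρ).2 ≠ none
      intro hc
      rw [hc] at hρ'
      exact hρ' rfl
    have h3 : ∑ ρ ∈ T, (annO AF b ζ κ ρ).getD 0 =
        PMTA.parikh (fun ρ => ((ζ ρ).1, annO AF b ζ κ ρ)) := by
      refine (finsum_eq_sum_of_support_subset _ ?_).symm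
      intro ρ hρ
      have hρ' : (annO AF b ζ κ ρ).getD 0 ≠ 0 := hρ
      rw [Finset.mem_coe, hmemT]
      refine hsub ?_
      show annO AF b ζ κ ρ ≠ none
      intro hc
      rw [hc] at hρ'
      exact hρ' rfl
    have h4 : PMTA.parikh ζ =
        padF sF b (PMTA.parikh (fun ρ => ((ζ ρ).1, annO AF b ζ κ ρ))) + T.card • tgF sF b := by
      rw [h1]
      have h5 : ∀ ρ ∈ T, (ζ ρ).2.getD 0 =
          padF sF b ((annO AF b ζ κ ρ).getD 0) + tgF sF b := by
        intro ρ hρ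
        rw [hpt ρ, Set.indicator_of_mem ((hmemT ρ).1 hρ)]
      rw [Finset.sum_congr rfl h5, Finset.sum_add_distrib, ← map_sum, h3, Finset.sum_const]
    have hcard : 1 ≤ T.card := by
      refine Finset.card_pos.mpr ?_
      obtain ⟨ρ, hρ⟩ := hne
      exact ⟨ρ, (hmemT ρ).2 hρ⟩
    obtain ⟨b₀, v, t, hv, ht, heq⟩ := hCc hne
    have hkey : padF sF b (PMTA.parikh (fun ρ => ((ζ ρ).1, annO AF b ζ κ ρ))) +
        T.card • tgF sF b = padF sF b₀ v + t • tgF sF b₀ := by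
      rw [← h4]
      exact heq
    have hbb : b = b₀ := side_eq_of_pad_tag hkey hcard
    subst hbb
    have := vec_eq_of_pad_tag hkey
    rw [this]
    exact hv
  · -- increments in D
    intro ρ d₁ h
    exact (annO_some AF h).1
  · -- Muller condition
    have hmode : ∀ (ρ : Pos) (p : Σ b, (AF b).Q), κ ρ = some (p, true) → (ζ ρ).2 ≠ none := by
      intro ρ p hp hl
      obtain ⟨b₀, q, a, q', q'', S, hok, hsrc, heq⟩ := hω ρ hl
      replace heq := prod4_eq_aux heq
      rcases hsrc with hS' | ⟨-, hS'⟩ <;> rw [heq.1, hS'] at hp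
      · have hh := congrArg (fun x : UQ AF => (x.getD (⟨b₀, q⟩, false)).2) hp
        simp [emb] at hh
      · exact nomatch hp
    intro π hπ
    have hlen := isPath_length hπ
    have hpne : ∀ i : ℕ, 1 ≤ i → π i ≠ [] := by
      intro i hi h
      have := hlen i
      rw [h] at this
      simp at this
      omega
    have hbad : {i : ℕ | κ (π i) ≠ emb AF b (projQ AF b (κ (π i))) false}.Finite := by
      refine Set.Finite.subset (Set.Finite.union (Set.finite_singleton 0)
        (hfin.preimage ((isPath_injective hπ).injOn))) ?_
      intro i hi
      rcases Nat.eq_zero_or_pos i with rfl | hpos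
      · exact Or.inl rfl
      · obtain ⟨q, m, hq⟩ := hcommit (π i) (hpne i hpos)
        cases m with
        | false =>
          exfalso
          apply hi
          rw [hq, projQ_emb]
        | true =>
          refine Or.inr ?_
          show π i ∈ PMTA.cntPos ζ
          exact hmode (π i) ⟨b, q⟩ hq
    obtain ⟨N, hN⟩ := exists_ge_not_mem_of_finite hbad
    have hev : ∀ i, N ≤ i → κ (π i) = emb AF b (projQ AF b (κ (π i))) false := by
      intro i hi
      have := hN i hi
      simpa using this
    have h1 : infOcc (fun i => κ (π i)) =
        (fun q => emb AF b q false) '' infOcc (fun i => projQ AF b (κ (π i))) := by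
      erw [infOcc_congr N hev, infOcc_comp_injective (emb_injective AF b false)]
    obtain ⟨b₀, X, hX, hXeq⟩ := hMul π hπ
    haveI : Finite (AF b).Q := (AF b).finQ
    obtain ⟨q0, hq0⟩ := infOcc_nonempty (fun i => projQ AF b (κ (π i)))
    have hmem : emb AF b q0 false ∈ (fun q => emb AF b₀ q false) '' X := by
      rw [← hXeq, h1]
      exact ⟨q0, hq0, rfl⟩
    obtain ⟨x, hx, hxe⟩ := hmem
    have hbb : b₀ = b :=
      congrArg (fun y : UQ AF => (y.getD (⟨b, q0⟩, false)).1.1) hxe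
    subst hbb
    have h3 : X = infOcc (fun i => projQ AF b₀ (κ (π i))) :=
      Set.image_injective.mpr (emb_injective AF b₀ false) (hXeq.symm.trans h1)
    rw [← h3]
    exact hX

end Sound
/-- For any two PMTA over the same finite alphabet there is a PMTA recognizing the
union of their languages. -/
theorem pmta_union {σ : Type} [Fintype σ] {s₁ s₂ : ℕ}
    (A₁ : PMTA σ s₁) (A₂ : PMTA σ s₂) :
    ∃ (s : ℕ) (A : PMTA σ s), A.Language = A₁.Language ∪ A₂.Language := by
  classical
  let sF : Bool → ℕ := fun b => match b with | true => s₁ | false => s₂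
  let AF : ∀ b, PMTA σ (sF b) := fun b => match b with | true => A₁ | false => A₂
  refine ⟨DS sF, BU AF, ?_⟩
  ext ξ
  constructor
  · intro h
    obtain ⟨b, hb⟩ := BU_language_ge AF h
    cases b
    · exact Or.inr hb
    · exact Or.inl hb
  · rintro (h | h)
    · exact BU_language_le AF true h
    · exact BU_language_le AF false h
end

section
/- For any two PMTA A₁ and A₂ over the same finite alphabet Σ, there exists a PMTA A over Σ with L(A) = L(A₁) ∩ L(A₂). -/
namespace PMTAInter

open Function

/-! ### Coordinate splitting -/

def vecL {a b : ℕ} (w : Vec (a + b)) : Vec a := fun i => w (Fin.castAdd b i)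
def vecR {a b : ℕ} (w : Vec (a + b)) : Vec b := fun j => w (Fin.natAdd a j)

def pairC {a b : ℕ} (S : Set (Vec a)) (T : Set (Vec b)) : Set (Vec (a + b)) :=
  {w | vecL w ∈ S ∧ vecR w ∈ T}

def liftC {n : ℕ} (C : Set (Vec n)) : Set (Vec (n + 1)) :=
  {w | w = 0 ∨ (Fin.init w ∈ C ∧ 1 ≤ w (Fin.last n))}

lemma vecL_append {a b : ℕ} (x : Vec a) (y : Vec b) : vecL (Fin.append x y) = x := by
  funext i; simp [vecL]

lemma vecR_append {a b : ℕ} (x : Vec a) (y : Vec b) : vecR (Fin.append x y) = y := by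
  funext i; simp [vecR]

lemma append_vecL_vecR {a b : ℕ} (w : Vec (a + b)) : Fin.append (vecL w) (vecR w) = w := by
  funext x
  refine Fin.addCases (fun j => ?_) (fun j => ?_) x
  · simp [vecL]
  · simp [vecR]

lemma append_add {a b : ℕ} (x x' : Vec a) (y y' : Vec b) :
    Fin.append x y + Fin.append x' y' = Fin.append (x + x') (y + y') := by
  funext t
  refine Fin.addCases (fun j => ?_) (fun j => ?_) t <;> simp

lemma smul_append {a b : ℕ} (m : ℕ) (x : Vec a) (y : Vec b) :
    m • Fin.append x y = Fin.append (m • x) (m • y) := by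
  funext t
  refine Fin.addCases (fun j => ?_) (fun j => ?_) t <;> simp

lemma append_sum {a b : ℕ} {ι : Type*} (t : Finset ι) (f : ι → Vec a) (g : ι → Vec b) :
    ∑ i ∈ t, Fin.append (f i) (g i) = Fin.append (∑ i ∈ t, f i) (∑ i ∈ t, g i) := by
  funext x
  refine Fin.addCases (fun j => ?_) (fun j => ?_) x <;>
    simp [Finset.sum_apply]

lemma isLinearSet_pair {a b : ℕ} {S : Set (Vec a)} {T : Set (Vec b)}
    (hS : IsLinearSetVec S) (hT : IsLinearSetVec T) : IsLinearSetVec (pairC S T) := by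
  obtain ⟨l₁, v₀, v, rfl⟩ := hS
  obtain ⟨l₂, u₀, u, rfl⟩ := hT
  refine ⟨l₁ + l₂, Fin.append v₀ u₀,
    fun i => Fin.addCases (fun i => Fin.append (v i) (0 : Vec b))
      (fun j => Fin.append (0 : Vec a) (u j)) i, ?_⟩
  have key : ∀ M : Fin (l₁ + l₂) → ℕ,
      Fin.append v₀ u₀ + ∑ i, M i • (Fin.addCases (fun i => Fin.append (v i) (0 : Vec b))
          (fun j => Fin.append (0 : Vec a) (u j)) i : Vec (a+b))
        = Fin.append (v₀ + ∑ i, M (Fin.castAdd l₂ i) • v i)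
            (u₀ + ∑ i, M (Fin.natAdd l₁ i) • u i) := by
    intro M
    rw [Fin.sum_univ_add]
    simp only [Fin.addCases_left, Fin.addCases_right, smul_append, smul_zero]
    rw [append_sum, append_sum, append_add, append_add]
    simp
  ext w
  simp only [pairC, Set.mem_setOf_eq]
  constructor
  · rintro ⟨⟨m, hm⟩, ⟨m', hm'⟩⟩
    refine ⟨fun i => Fin.addCases m m' i, ?_⟩
    rw [key]
    simp only [Fin.addCases_left, Fin.addCases_right]
    rw [← hm, ← hm', append_vecL_vecR]
  · rintro ⟨M, rfl⟩
    rw [key]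
    exact ⟨by rw [vecL_append]; exact ⟨_, rfl⟩, by rw [vecR_append]; exact ⟨_, rfl⟩⟩

lemma isSemilinearSet_union {n : ℕ} {S T : Set (Vec n)}
    (hS : IsSemilinearSetVec S) (hT : IsSemilinearSetVec T) : IsSemilinearSetVec (S ∪ T) := by
  obtain ⟨k₁, Cs₁, h₁, rfl⟩ := hS
  obtain ⟨k₂, Cs₂, h₂, rfl⟩ := hT
  refine ⟨k₁ + k₂, fun i => Fin.addCases Cs₁ Cs₂ i, ?_, ?_⟩
  · intro i
    refine Fin.addCases (fun j => ?_) (fun j => ?_) i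
    · simpa using h₁ j
    · simpa using h₂ j
  · ext x
    simp only [Set.mem_union, Set.mem_iUnion]
    constructor
    · rintro (⟨i, hi⟩ | ⟨i, hi⟩)
      · exact ⟨Fin.castAdd k₂ i, by simpa using hi⟩
      · exact ⟨Fin.natAdd k₁ i, by simpa using hi⟩
    · rintro ⟨i, hi⟩
      revert hi
      refine Fin.addCases (fun j => ?_) (fun j => ?_) i <;> intro hj
      · exact Or.inl ⟨j, by simpa using hj⟩
      · exact Or.inr ⟨j, by simpa using hj⟩

lemma isSemilinearSet_pair {a b : ℕ} {S : Set (Vec a)} {T : Set (Vec b)}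
    (hS : IsSemilinearSetVec S) (hT : IsSemilinearSetVec T) : IsSemilinearSetVec (pairC S T) := by
  obtain ⟨k₁, Cs₁, h₁, rfl⟩ := hS
  obtain ⟨k₂, Cs₂, h₂, rfl⟩ := hT
  refine ⟨k₁ * k₂, fun p => pairC (Cs₁ (finProdFinEquiv.symm p).1) (Cs₂ (finProdFinEquiv.symm p).2),
    fun p => isLinearSet_pair (h₁ _) (h₂ _), ?_⟩
  ext w
  simp only [pairC, Set.mem_setOf_eq, Set.mem_iUnion]
  constructor
  · rintro ⟨⟨i, hi⟩, ⟨j, hj⟩⟩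
    exact ⟨finProdFinEquiv (i, j), by simpa using ⟨hi, hj⟩⟩
  · rintro ⟨p, hp, hp'⟩
    exact ⟨⟨_, hp⟩, ⟨_, hp'⟩⟩

lemma isLinearSet_zero {n : ℕ} : IsLinearSetVec {w : Vec n | w = 0} := by
  refine ⟨0, 0, Fin.elim0, ?_⟩
  ext w
  simp

lemma isLinearSet_ge_one : IsLinearSetVec {g : Vec 1 | 1 ≤ g 0} := by
  refine ⟨1, fun _ => 1, fun _ _ => 1, ?_⟩
  ext g
  simp only [Set.mem_setOf_eq, Fin.sum_univ_one]
  constructor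
  · intro hg
    refine ⟨fun _ => g 0 - 1, ?_⟩
    funext x
    have : x = 0 := Subsingleton.elim _ _
    subst this
    simp only [Pi.add_apply, Pi.smul_apply, smul_eq_mul, mul_one]
    omega
  · rintro ⟨m, rfl⟩
    simp

lemma isSemilinearSet_of_isLinearSet {n : ℕ} {S : Set (Vec n)} (h : IsLinearSetVec S) :
    IsSemilinearSetVec S :=
  ⟨1, fun _ => S, fun _ => h, by rw [Set.iUnion_const]⟩

lemma liftC_eq {n : ℕ} (C : Set (Vec n)) :
    liftC C = {w : Vec (n+1) | w = 0} ∪ pairC C {g : Vec 1 | 1 ≤ g 0} := by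
  ext w
  have h1 : vecL (a := n) (b := 1) w = Fin.init w := rfl
  have h2 : vecR (a := n) (b := 1) w 0 = w (Fin.last n) := rfl
  simp only [liftC, Set.mem_setOf_eq, Set.mem_union, pairC, h1, h2]

lemma isSemilinearSet_liftC {n : ℕ} {C : Set (Vec n)} (hC : IsSemilinearSetVec C) :
    IsSemilinearSetVec (liftC C) := by
  rw [liftC_eq]
  exact isSemilinearSet_union (isSemilinearSet_of_isLinearSet isLinearSet_zero)
    (isSemilinearSet_pair hC (isSemilinearSet_of_isLinearSet isLinearSet_ge_one))

end PMTAInter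
namespace PMTAInter

open Function

/-! ### finsum helpers -/

lemma finsum_apply' {ι α M : Type*} [AddCommMonoid M] {f : ι → α → M}
    (hf : (Function.support f).Finite) (a : α) : (∑ᶠ i, f i) a = ∑ᶠ i, f i a := by
  rw [finsum_eq_sum f hf, Finset.sum_apply,
    finsum_eq_sum_of_support_subset (fun i => f i a) (s := hf.toFinset)]
  intro x hx
  have : f x ≠ 0 := fun h0 => hx (by simp [Function.mem_support] at hx ⊢; rw [h0]; rfl)
  simpa using this

/-! ### infOcc helpers -/

lemma infOcc_image {Q Q' : Type*} [Finite Q] (g : ℕ → Q) (h : Q → Q') :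
    infOcc (fun i => h (g i)) = h '' infOcc g := by
  ext q'
  constructor
  · intro hq'
    by_contra hc
    have hfib : ∀ q : Q, ({n : ℕ | g n = q ∧ h q = q'}).Finite := by
      intro q
      by_cases hq : h q = q'
      · by_cases hinf : ({n : ℕ | g n = q}).Finite
        · exact hinf.subset fun n hn => hn.1
        · exact absurd ⟨q, hinf, hq⟩ hc
      · convert Set.finite_empty using 1
        ext n; simp [hq]
    have : ({n : ℕ | h (g n) = q'}).Finite := by
      have : {n : ℕ | h (g n) = q'} = ⋃ q : Q, {n : ℕ | g n = q ∧ h q = q'} := by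
        ext n; simp only [Set.mem_setOf_eq, Set.mem_iUnion]
        exact ⟨fun hn => ⟨g n, rfl, hn⟩, fun ⟨q, h1, h2⟩ => h1 ▸ h2⟩
      rw [this]
      exact Set.finite_iUnion hfib
    exact hq' this
  · rintro ⟨q, hq, rfl⟩
    exact hq.mono fun n hn => by simp only [Set.mem_setOf_eq] at hn ⊢; rw [hn]

/-! ### path helpers -/

lemma path_length {π : ℕ → Pos} (h : IsPath π) (i : ℕ) : (π i).length = i := by
  induction i with
  | zero => rw [h.1]; rfl
  | succ n ih =>
    obtain ⟨b, hb⟩ := h.2 n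
    rw [hb, List.length_append, ih]
    rfl

lemma path_injective {π : ℕ → Pos} (h : IsPath π) : Function.Injective π := by
  intro i j hij
  have := path_length h i
  rw [hij, path_length h j] at this
  omega

lemma path_preimage_finite {π : ℕ → Pos} (h : IsPath π) {R : Set Pos} (hR : R.Finite) :
    {n : ℕ | π n ∈ R}.Finite := by
  have : {n : ℕ | π n ∈ R} = π ⁻¹' R := rfl
  rw [this]
  exact hR.preimage ((path_injective h).injOn)

lemma prefixes_finite (ρ' : Pos) : {l : Pos | l <+: ρ'}.Finite := by
  have : {l : Pos | l <+: ρ'} = {l : Pos | l ∈ ρ'.inits} := by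
    ext l; simp [List.mem_inits]
  rw [this]
  exact ρ'.inits.finite_toSet

/-! ### the key membership lemma for `liftC` -/

lemma lift_mem {σ : Type} {n : ℕ} (ζ' : Pos → σ × Option (Vec n)) (C : Set (Vec n))
    (w : Vec (n + 1)) (hfin : (PMTA.cntPos ζ').Finite)
    (hinit : ∀ i, w (Fin.castSucc i) = PMTA.parikh ζ' i)
    (hlast : w (Fin.last n) = ∑ᶠ ρ, (if ((ζ' ρ).2).isSome then (1 : ℕ) else 0)) :
    w ∈ liftC C ↔ ((PMTA.cntPos ζ').Nonempty → PMTA.parikh ζ' ∈ C) := by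
  have hini : Fin.init w = PMTA.parikh ζ' := funext hinit
  by_cases hne : (PMTA.cntPos ζ').Nonempty
  · obtain ⟨ρ₀, hρ₀⟩ := hne
    have hsupp : Function.support (fun ρ => if ((ζ' ρ).2).isSome then (1 : ℕ) else 0)
        ⊆ PMTA.cntPos ζ' := by
      intro ρ hρ
      simp only [Function.mem_support, ne_eq, ite_eq_right_iff, not_forall] at hρ
      simp only [PMTA.cntPos, Set.mem_setOf_eq]
      exact Option.isSome_iff_ne_none.mp hρ.1
    have h1 : 1 ≤ w (Fin.last n) := by
      rw [hlast]
      have := single_le_finsum (f := fun ρ => if ((ζ' ρ).2).isSome then (1 : ℕ) else 0) ρ₀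
        (hfin.subset hsupp) (fun j => Nat.zero_le _)
      simpa [Option.isSome_iff_ne_none.mpr hρ₀] using this
    have hw0 : w ≠ 0 := by
      intro h0
      rw [h0] at h1
      simp at h1
    simp only [liftC, Set.mem_setOf_eq]
    constructor
    · rintro (rfl | ⟨h, _⟩)
      · exact absurd rfl hw0
      · intro _; rwa [hini] at h
    · intro h
      exact Or.inr ⟨by rw [hini]; exact h ⟨ρ₀, hρ₀⟩, h1⟩
  · have hz : ∀ ρ, (ζ' ρ).2 = none := by
      intro ρ
      by_contra hρ
      exact hne ⟨ρ, hρ⟩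
    have hpz : PMTA.parikh ζ' = 0 :=
      finsum_eq_zero_of_forall_eq_zero fun ρ => by simp [hz ρ]
    constructor
    · intro _ hcontr
      exact absurd hcontr hne
    · intro _
      left
      funext x
      refine Fin.lastCases ?_ (fun i => ?_) x
      · rw [hlast, finsum_eq_zero_of_forall_eq_zero fun ρ => by simp [hz ρ]]; rfl
      · rw [hinit i, hpz]; rfl

end PMTAInter
namespace PMTAInter

open Function

variable {σ : Type} {s₁ s₂ : ℕ}

/-! ### the embedding of pairs of optional vectors -/

def ext0 {n : ℕ} (o : Option (Vec n)) : Vec (n + 1) :=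
  Fin.snoc (o.getD 0) (if o.isSome then 1 else 0)

def emb (o₁ : Option (Vec s₁)) (o₂ : Option (Vec s₂)) : Vec ((s₁ + 1) + (s₂ + 1)) :=
  Fin.append (ext0 o₁) (ext0 o₂)

lemma emb_left_castSucc (o₁ : Option (Vec s₁)) (o₂ : Option (Vec s₂)) (i : Fin s₁) :
    emb o₁ o₂ (Fin.castAdd (s₂ + 1) (Fin.castSucc i)) = (o₁.getD 0) i := by
  rw [emb, Fin.append_left, ext0, Fin.snoc_castSucc]

lemma emb_left_last (o₁ : Option (Vec s₁)) (o₂ : Option (Vec s₂)) :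
    emb o₁ o₂ (Fin.castAdd (s₂ + 1) (Fin.last s₁)) = if o₁.isSome then 1 else 0 := by
  rw [emb, Fin.append_left, ext0, Fin.snoc_last]

lemma emb_right_castSucc (o₁ : Option (Vec s₁)) (o₂ : Option (Vec s₂)) (i : Fin s₂) :
    emb o₁ o₂ (Fin.natAdd (s₁ + 1) (Fin.castSucc i)) = (o₂.getD 0) i := by
  rw [emb, Fin.append_right, ext0, Fin.snoc_castSucc]

lemma emb_right_last (o₁ : Option (Vec s₁)) (o₂ : Option (Vec s₂)) :
    emb o₁ o₂ (Fin.natAdd (s₁ + 1) (Fin.last s₂)) = if o₂.isSome then 1 else 0 := by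
  rw [emb, Fin.append_right, ext0, Fin.snoc_last]

/-- One step of a component automaton: a counting step if `o = some d`,
a Muller step if `o = none`. -/
def stepRel {s : ℕ} (A : PMTA σ s) (p : A.Q) (a : σ) (o : Option (Vec s)) (r t : A.Q) : Prop :=
  match o with
  | some d => (p, (a, d), r, t) ∈ A.ΔP
  | none => (p, a, r, t) ∈ A.Δω

lemma stepRel_none {s : ℕ} (A : PMTA σ s) (p : A.Q) (a : σ) (r t : A.Q) :
    stepRel A p a none r t = ((p, a, r, t) ∈ A.Δω) := rfl

lemma stepRel_some {s : ℕ} (A : PMTA σ s) (p : A.Q) (a : σ) (d : Vec s) (r t : A.Q) :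
    stepRel A p a (some d) r t = ((p, (a, d), r, t) ∈ A.ΔP) := rfl

/-! ### the product automaton -/

def prod (A₁ : PMTA σ s₁) (A₂ : PMTA σ s₂) : PMTA σ ((s₁ + 1) + (s₂ + 1)) where
  Q := (A₁.Q × A₂.Q) × Bool
  finQ := by have := A₁.finQ; have := A₂.finQ; infer_instance
  QP := {q | q.2 = true}
  Qω := {q | q.2 = false}
  hdisj := by
    rw [Set.disjoint_left]
    rintro q h1 h2
    simp only [Set.mem_setOf_eq] at h1 h2
    rw [h1] at h2
    exact Bool.noConfusion h2
  hcover := by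
    ext q
    simp only [Set.mem_union, Set.mem_setOf_eq, Set.mem_univ, iff_true]
    cases q.2 <;> simp
  qI := ((A₁.qI, A₂.qI), true)
  D := (fun p : Option (Vec s₁) × Option (Vec s₂) => emb p.1 p.2) ''
    ((insert none (some '' A₁.D)) ×ˢ (insert none (some '' A₂.D)))
  hD := (((A₁.hD.image _).insert _).prod ((A₂.hD.image _).insert _)).image _
  ΔP := {x | ∃ p₁ p₂ a o₁ o₂ r₁ r₂ t₁ t₂ b c,
      x = (((p₁, p₂), true), (a, emb o₁ o₂), ((r₁, r₂), b), ((t₁, t₂), c)) ∧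
      stepRel A₁ p₁ a o₁ r₁ t₁ ∧ stepRel A₂ p₂ a o₂ r₂ t₂}
  Δω := {x | ∃ p₁ p₂ a r₁ r₂ t₁ t₂,
      x = (((p₁, p₂), false), a, ((r₁, r₂), false), ((t₁, t₂), false)) ∧
      (p₁, a, r₁, t₁) ∈ A₁.Δω ∧ (p₂, a, r₂, t₂) ∈ A₂.Δω}
  hΔP := by
    rintro x ⟨p₁, p₂, a, o₁, o₂, r₁, r₂, t₁, t₂, b, c, rfl, h1, h2⟩
    constructor
    · exact Or.inl rfl
    · refine ⟨(o₁, o₂), ⟨?_, ?_⟩, rfl⟩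
      · cases o₁ with
        | none => exact Set.mem_insert _ _
        | some d₁ => exact Set.mem_insert_of_mem _ ⟨d₁, (A₁.hΔP _ h1).2, rfl⟩
      · cases o₂ with
        | none => exact Set.mem_insert _ _
        | some d₂ => exact Set.mem_insert_of_mem _ ⟨d₂, (A₂.hΔP _ h2).2, rfl⟩
  hΔω := by
    rintro x ⟨p₁, p₂, a, r₁, r₂, t₁, t₂, rfl, h1, h2⟩
    exact ⟨Or.inl rfl, rfl, rfl⟩
  F := {X | (∀ q ∈ X, q.2 = false) ∧
      (fun q : (A₁.Q × A₂.Q) × Bool => q.1.1) '' X ∈ A₁.F ∧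
      (fun q : (A₁.Q × A₂.Q) × Bool => q.1.2) '' X ∈ A₂.F}
  hF := fun X hX q hq => hX.1 q hq
  C := pairC (liftC A₁.C) (liftC A₂.C)
  hC := isSemilinearSet_pair (isSemilinearSet_liftC A₁.hC) (isSemilinearSet_liftC A₂.hC)

/-! ### coupled trees -/

def Coupled (ζ : Pos → σ × Option (Vec ((s₁ + 1) + (s₂ + 1))))
    (ζ₁ : Pos → σ × Option (Vec s₁)) (ζ₂ : Pos → σ × Option (Vec s₂)) : Prop :=
  ∀ ρ : Pos, ((ζ ρ).2 = none ∧ (ζ₁ ρ).2 = none ∧ (ζ₂ ρ).2 = none) ∨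
    (ζ ρ).2 = some (emb (ζ₁ ρ).2 (ζ₂ ρ).2)

lemma Coupled.cnt₁_subset {ζ : Pos → σ × Option (Vec ((s₁ + 1) + (s₂ + 1)))}
    {ζ₁ : Pos → σ × Option (Vec s₁)} {ζ₂ : Pos → σ × Option (Vec s₂)}
    (h : Coupled ζ ζ₁ ζ₂) : PMTA.cntPos ζ₁ ⊆ PMTA.cntPos ζ := by
  intro ρ hρ
  rcases h ρ with ⟨_, h1, _⟩ | h1
  · exact absurd h1 hρ
  · simp only [PMTA.cntPos, Set.mem_setOf_eq, h1]
    exact Option.some_ne_none _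

lemma Coupled.cnt₂_subset {ζ : Pos → σ × Option (Vec ((s₁ + 1) + (s₂ + 1)))}
    {ζ₁ : Pos → σ × Option (Vec s₁)} {ζ₂ : Pos → σ × Option (Vec s₂)}
    (h : Coupled ζ ζ₁ ζ₂) : PMTA.cntPos ζ₂ ⊆ PMTA.cntPos ζ := by
  intro ρ hρ
  rcases h ρ with ⟨_, _, h1⟩ | h1
  · exact absurd h1 hρ
  · simp only [PMTA.cntPos, Set.mem_setOf_eq, h1]
    exact Option.some_ne_none _

lemma support_getD_subset {τ : Type} {n : ℕ} (ζ' : Pos → τ × Option (Vec n)) :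
    Function.support (fun ρ => ((ζ' ρ).2).getD 0) ⊆ PMTA.cntPos ζ' := by
  intro ρ hρ
  simp only [Function.mem_support, ne_eq] at hρ
  simp only [PMTA.cntPos, Set.mem_setOf_eq]
  intro h0
  exact hρ (by rw [h0]; rfl)

lemma coupled_coords {ζ : Pos → σ × Option (Vec ((s₁ + 1) + (s₂ + 1)))}
    {ζ₁ : Pos → σ × Option (Vec s₁)} {ζ₂ : Pos → σ × Option (Vec s₂)}
    (h : Coupled ζ ζ₁ ζ₂) (hfin : (PMTA.cntPos ζ).Finite) :
    (∀ i, vecL (PMTA.parikh ζ) (Fin.castSucc i) = PMTA.parikh ζ₁ i) ∧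
    vecL (PMTA.parikh ζ) (Fin.last s₁) = (∑ᶠ ρ, if ((ζ₁ ρ).2).isSome then (1:ℕ) else 0) ∧
    (∀ i, vecR (PMTA.parikh ζ) (Fin.castSucc i) = PMTA.parikh ζ₂ i) ∧
    vecR (PMTA.parikh ζ) (Fin.last s₂) = (∑ᶠ ρ, if ((ζ₂ ρ).2).isSome then (1:ℕ) else 0) := by
  have hs : (Function.support (fun ρ => ((ζ ρ).2).getD 0)).Finite :=
    hfin.subset (support_getD_subset ζ)
  have hs₁ : (Function.support (fun ρ => ((ζ₁ ρ).2).getD 0)).Finite :=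
    (hfin.subset (h.cnt₁_subset)).subset (support_getD_subset ζ₁)
  have hs₂ : (Function.support (fun ρ => ((ζ₂ ρ).2).getD 0)).Finite :=
    (hfin.subset (h.cnt₂_subset)).subset (support_getD_subset ζ₂)
  refine ⟨fun i => ?_, ?_, fun i => ?_, ?_⟩
  · rw [show vecL (PMTA.parikh ζ) (Fin.castSucc i)
        = PMTA.parikh ζ (Fin.castAdd (s₂+1) (Fin.castSucc i)) from rfl,
      PMTA.parikh, finsum_apply' hs, PMTA.parikh, finsum_apply' hs₁]
    refine finsum_congr fun ρ => ?_
    rcases h ρ with ⟨h0, h1, _⟩ | h1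
    · simp [h0, h1]
    · rw [h1]
      show emb (ζ₁ ρ).2 (ζ₂ ρ).2 _ = _
      rw [emb_left_castSucc]
  · rw [show vecL (PMTA.parikh ζ) (Fin.last s₁)
        = PMTA.parikh ζ (Fin.castAdd (s₂+1) (Fin.last s₁)) from rfl,
      PMTA.parikh, finsum_apply' hs]
    refine finsum_congr fun ρ => ?_
    rcases h ρ with ⟨h0, h1, _⟩ | h1
    · simp [h0, h1]
    · rw [h1]
      show emb (ζ₁ ρ).2 (ζ₂ ρ).2 _ = _
      rw [emb_left_last]
  · rw [show vecR (PMTA.parikh ζ) (Fin.castSucc i)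
        = PMTA.parikh ζ (Fin.natAdd (s₁+1) (Fin.castSucc i)) from rfl,
      PMTA.parikh, finsum_apply' hs, PMTA.parikh, finsum_apply' hs₂]
    refine finsum_congr fun ρ => ?_
    rcases h ρ with ⟨h0, _, h1⟩ | h1
    · simp [h0, h1]
    · rw [h1]
      show emb (ζ₁ ρ).2 (ζ₂ ρ).2 _ = _
      rw [emb_right_castSucc]
  · rw [show vecR (PMTA.parikh ζ) (Fin.last s₂)
        = PMTA.parikh ζ (Fin.natAdd (s₁+1) (Fin.last s₂)) from rfl,
      PMTA.parikh, finsum_apply' hs]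
    refine finsum_congr fun ρ => ?_
    rcases h ρ with ⟨h0, _, h1⟩ | h1
    · simp [h0, h1]
    · rw [h1]
      show emb (ζ₁ ρ).2 (ζ₂ ρ).2 _ = _
      rw [emb_right_last]

lemma coupled_mem_C {A₁ : PMTA σ s₁} {A₂ : PMTA σ s₂}
    {ζ : Pos → σ × Option (Vec ((s₁ + 1) + (s₂ + 1)))}
    {ζ₁ : Pos → σ × Option (Vec s₁)} {ζ₂ : Pos → σ × Option (Vec s₂)}
    (h : Coupled ζ ζ₁ ζ₂) (hfin : (PMTA.cntPos ζ).Finite) :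
    PMTA.parikh ζ ∈ (prod A₁ A₂).C ↔
      (((PMTA.cntPos ζ₁).Nonempty → PMTA.parikh ζ₁ ∈ A₁.C) ∧
       ((PMTA.cntPos ζ₂).Nonempty → PMTA.parikh ζ₂ ∈ A₂.C)) := by
  obtain ⟨hL, hLl, hR, hRl⟩ := coupled_coords h hfin
  show vecL (PMTA.parikh ζ) ∈ liftC A₁.C ∧ vecR (PMTA.parikh ζ) ∈ liftC A₂.C ↔ _
  rw [lift_mem ζ₁ A₁.C _ (hfin.subset h.cnt₁_subset) hL hLl,
    lift_mem ζ₂ A₂.C _ (hfin.subset h.cnt₂_subset) hR hRl]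

end PMTAInter
namespace PMTAInter

open Function

open scoped Classical

variable {σ : Type} {s₁ s₂ : ℕ}

noncomputable def mkTree (ξ : Pos → σ) (ζ₁ : Pos → σ × Option (Vec s₁))
    (ζ₂ : Pos → σ × Option (Vec s₂)) (R : Set Pos) :
    Pos → σ × Option (Vec ((s₁ + 1) + (s₂ + 1))) :=
  fun ρ => (ξ ρ, if ρ ∈ R then some (emb (ζ₁ ρ).2 (ζ₂ ρ).2) else none)

noncomputable def mkRun {A₁ : PMTA σ s₁} {A₂ : PMTA σ s₂}
    (κ₁ : Pos → A₁.Q) (κ₂ : Pos → A₂.Q) (R : Set Pos) : Pos → (prod A₁ A₂).Q :=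
  fun ρ => ((κ₁ ρ, κ₂ ρ), if ρ ∈ R then true else false)

lemma forward {A₁ : PMTA σ s₁} {A₂ : PMTA σ s₂} {ξ : Pos → σ}
    (h₁ : ξ ∈ A₁.Language) (h₂ : ξ ∈ A₂.Language) : ξ ∈ (prod A₁ A₂).Language := by
  obtain ⟨ζ₁, κ₁, hproj₁, ⟨hI₁, hP₁, hω₁⟩, hfin₁, hpar₁, hD₁, hMul₁⟩ := h₁
  obtain ⟨ζ₂, κ₂, hproj₂, ⟨hI₂, hP₂, hω₂⟩, hfin₂, hpar₂, hD₂, hMul₂⟩ := h₂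
  set R : Set Pos :=
    {ρ | ρ = [] ∨ ∃ ρ', (ρ' ∈ PMTA.cntPos ζ₁ ∪ PMTA.cntPos ζ₂) ∧ ρ <+: ρ'} with hR
  have hRroot : ([] : Pos) ∈ R := Or.inl rfl
  have hRfin : R.Finite := by
    have hsub : R ⊆ {([] : Pos)} ∪ ⋃ ρ' ∈ (PMTA.cntPos ζ₁ ∪ PMTA.cntPos ζ₂), {l | l <+: ρ'} := by
      rintro ρ (rfl | ⟨ρ', hρ', hpre⟩)
      · exact Or.inl rfl
      · exact Or.inr (Set.mem_biUnion hρ' hpre)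
    exact Set.Finite.subset
      ((Set.finite_singleton _).union ((hfin₁.union hfin₂).biUnion fun ρ' _ => prefixes_finite ρ'))
      hsub
  have hRcl : ∀ (ρ : Pos) (b : Bool), (ρ ++ [b]) ∈ R → ρ ∈ R := by
    rintro ρ b (hnil | ⟨ρ', hρ', hpre⟩)
    · exact absurd hnil (by simp)
    · exact Or.inr ⟨ρ', hρ', (List.prefix_append ρ [b]).trans hpre⟩
  have hRsup₁ : PMTA.cntPos ζ₁ ⊆ R := fun ρ hρ => Or.inr ⟨ρ, Or.inl hρ, List.prefix_refl ρ⟩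
  have hRsup₂ : PMTA.cntPos ζ₂ ⊆ R := fun ρ hρ => Or.inr ⟨ρ, Or.inr hρ, List.prefix_refl ρ⟩
  have hz₁ : ∀ ρ ∉ R, (ζ₁ ρ).2 = none := fun ρ hρ => not_not.mp fun h => hρ (hRsup₁ h)
  have hz₂ : ∀ ρ ∉ R, (ζ₂ ρ).2 = none := fun ρ hρ => not_not.mp fun h => hρ (hRsup₂ h)
  refine ⟨mkTree ξ ζ₁ ζ₂ R, mkRun κ₁ κ₂ R, fun ρ => rfl, ?_, ?_, ?_, ?_, ?_⟩
  -- IsRun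
  · refine ⟨?_, ?_, ?_⟩
    · simp only [mkRun]
      rw [hI₁, hI₂, if_pos hRroot]
      rfl
    · intro ρ d hd
      simp only [mkTree] at hd
      by_cases hρR : ρ ∈ R
      swap
      · rw [if_neg hρR] at hd; exact absurd hd (by simp)
      rw [if_pos hρR] at hd
      have hd' : d = emb (ζ₁ ρ).2 (ζ₂ ρ).2 := (Option.some_injective _ hd).symm
      subst hd'
      refine ⟨κ₁ ρ, κ₂ ρ, ξ ρ, (ζ₁ ρ).2, (ζ₂ ρ).2,
        κ₁ (ρ ++ [false]), κ₂ (ρ ++ [false]), κ₁ (ρ ++ [true]), κ₂ (ρ ++ [true]),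
        (mkRun (A₁ := A₁) (A₂ := A₂) κ₁ κ₂ R (ρ ++ [false])).2,
        (mkRun (A₁ := A₁) (A₂ := A₂) κ₁ κ₂ R (ρ ++ [true])).2, ?_, ?_, ?_⟩
      · have hmk : mkRun (A₁ := A₁) (A₂ := A₂) κ₁ κ₂ R ρ = ((κ₁ ρ, κ₂ ρ), true) := by
          simp only [mkRun]; rw [if_pos hρR]
        rw [hmk]
        rfl
      · rcases hc : (ζ₁ ρ).2 with _ | d₁
        · rw [stepRel_none, ← hproj₁ ρ]
          exact hω₁ ρ hc
        · rw [stepRel_some, ← hproj₁ ρ]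
          exact hP₁ ρ d₁ hc
      · rcases hc : (ζ₂ ρ).2 with _ | d₂
        · rw [stepRel_none, ← hproj₂ ρ]
          exact hω₂ ρ hc
        · rw [stepRel_some, ← hproj₂ ρ]
          exact hP₂ ρ d₂ hc
    · intro ρ hnone
      simp only [mkTree] at hnone
      have hρR : ρ ∉ R := by
        intro hρR; rw [if_pos hρR] at hnone; exact Option.some_ne_none _ hnone
      have h0 : (ρ ++ [false]) ∉ R := fun hc => hρR (hRcl ρ _ hc)
      have h1 : (ρ ++ [true]) ∉ R := fun hc => hρR (hRcl ρ _ hc)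
      refine ⟨κ₁ ρ, κ₂ ρ, ξ ρ, κ₁ (ρ ++ [false]), κ₂ (ρ ++ [false]),
        κ₁ (ρ ++ [true]), κ₂ (ρ ++ [true]), ?_, ?_, ?_⟩
      · have hmk : mkRun (A₁ := A₁) (A₂ := A₂) κ₁ κ₂ R ρ = ((κ₁ ρ, κ₂ ρ), false) := by
          simp only [mkRun]; rw [if_neg hρR]
        have hmk0 : mkRun (A₁ := A₁) (A₂ := A₂) κ₁ κ₂ R (ρ ++ [false])
            = ((κ₁ (ρ ++ [false]), κ₂ (ρ ++ [false])), false) := by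
          simp only [mkRun]; rw [if_neg h0]
        have hmk1 : mkRun (A₁ := A₁) (A₂ := A₂) κ₁ κ₂ R (ρ ++ [true])
            = ((κ₁ (ρ ++ [true]), κ₂ (ρ ++ [true])), false) := by
          simp only [mkRun]; rw [if_neg h1]
        rw [hmk, hmk0, hmk1]
        rfl
      · rw [← hproj₁ ρ]; exact hω₁ ρ (hz₁ ρ hρR)
      · rw [← hproj₂ ρ]; exact hω₂ ρ (hz₂ ρ hρR)
  -- finiteness of the counting part
  · refine hRfin.subset fun ρ hρ => ?_
    simp only [PMTA.cntPos, mkTree, Set.mem_setOf_eq] at hρ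
    by_contra hρR
    rw [if_neg hρR] at hρ
    exact hρ rfl
  -- Parikh condition
  · have hcoup : Coupled (mkTree ξ ζ₁ ζ₂ R) ζ₁ ζ₂ := by
      intro ρ
      by_cases hρR : ρ ∈ R
      · exact Or.inr (by simp only [mkTree, if_pos hρR])
      · exact Or.inl ⟨by simp only [mkTree, if_neg hρR], hz₁ ρ hρR, hz₂ ρ hρR⟩
    have hfinζ : (PMTA.cntPos (mkTree ξ ζ₁ ζ₂ R)).Finite := by
      refine hRfin.subset fun ρ hρ => ?_
      simp only [PMTA.cntPos, mkTree, Set.mem_setOf_eq] at hρ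
      by_contra hρR
      rw [if_neg hρR] at hρ
      exact hρ rfl
    intro _
    exact (coupled_mem_C hcoup hfinζ).mpr ⟨hpar₁, hpar₂⟩
  -- increments stem from D
  · intro ρ d hd
    simp only [mkTree] at hd
    by_cases hρR : ρ ∈ R
    swap
    · rw [if_neg hρR] at hd; exact absurd hd (by simp)
    rw [if_pos hρR] at hd
    have hd' : d = emb (ζ₁ ρ).2 (ζ₂ ρ).2 := (Option.some_injective _ hd).symm
    refine ⟨((ζ₁ ρ).2, (ζ₂ ρ).2), ⟨?_, ?_⟩, hd'.symm⟩
    · rcases hc : (ζ₁ ρ).2 with _ | d₁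
      · exact Set.mem_insert _ _
      · exact Set.mem_insert_of_mem _ ⟨d₁, hD₁ ρ d₁ hc, rfl⟩
    · rcases hc : (ζ₂ ρ).2 with _ | d₂
      · exact Set.mem_insert _ _
      · exact Set.mem_insert_of_mem _ ⟨d₂, hD₂ ρ d₂ hc, rfl⟩
  -- Muller condition
  · intro π hπ
    haveI : Finite (prod A₁ A₂).Q := (prod A₁ A₂).finQ
    refine ⟨?_, ?_, ?_⟩
    · intro q hq
      by_contra hq2
      have hq2 : q.2 = true := by
        cases hq : q.2
        · exact absurd hq hq2
        · rfl
      have hsub : {n : ℕ | mkRun (A₁ := A₁) (A₂ := A₂) κ₁ κ₂ R (π n) = q} ⊆ {n : ℕ | π n ∈ R} := by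
        intro n hn
        simp only [Set.mem_setOf_eq, mkRun] at hn ⊢
        by_contra hnR
        rw [← hn, if_neg hnR] at hq2
        exact Bool.noConfusion hq2
      exact (hq.mono hsub) (path_preimage_finite hπ hRfin)
    · have hmm := hMul₁ π hπ
      rwa [show (fun i => κ₁ (π i))
          = (fun i => (mkRun (A₁ := A₁) (A₂ := A₂) κ₁ κ₂ R (π i)).1.1) from rfl,
        infOcc_image (fun i => mkRun (A₁ := A₁) (A₂ := A₂) κ₁ κ₂ R (π i))
          (fun q => q.1.1)] at hmm
    · have hmm := hMul₂ π hπ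
      rwa [show (fun i => κ₂ (π i))
          = (fun i => (mkRun (A₁ := A₁) (A₂ := A₂) κ₁ κ₂ R (π i)).1.2) from rfl,
        infOcc_image (fun i => mkRun (A₁ := A₁) (A₂ := A₂) κ₁ κ₂ R (π i))
          (fun q => q.1.2)] at hmm

end PMTAInter
namespace PMTAInter

open Function

open scoped Classical

variable {σ : Type} {s₁ s₂ : ℕ}

lemma backward {A₁ : PMTA σ s₁} {A₂ : PMTA σ s₂} {ξ : Pos → σ}
    (h : ξ ∈ (prod A₁ A₂).Language) : ξ ∈ A₁.Language ∧ ξ ∈ A₂.Language := by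
  obtain ⟨ζ, κ, hproj, ⟨hI, hP, hω⟩, hfin, hpar, hD, hMul⟩ := h
  set Pred : Pos → (Option (Vec s₁) × Option (Vec s₂)) → Prop := fun ρ o =>
    (ζ ρ).2 = some (emb o.1 o.2) ∧
    stepRel A₁ (κ ρ).1.1 (ξ ρ) o.1 (κ (ρ ++ [false])).1.1 (κ (ρ ++ [true])).1.1 ∧
    stepRel A₂ (κ ρ).1.2 (ξ ρ) o.2 (κ (ρ ++ [false])).1.2 (κ (ρ ++ [true])).1.2
    with hPred
  have hex : ∀ (ρ : Pos) (d : Vec ((s₁ + 1) + (s₂ + 1))), (ζ ρ).2 = some d →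
      ∃ o, Pred ρ o := by
    intro ρ d hd
    obtain ⟨p₁, p₂, a, o₁, o₂, r₁, r₂, t₁, t₂, b, c, heq, h1, h2⟩ := hP ρ d hd
    replace heq := And.intro (Prod.mk.inj heq).1 (And.intro (Prod.mk.inj (Prod.mk.inj (Prod.mk.inj heq).2).1) (Prod.mk.inj (Prod.mk.inj (Prod.mk.inj heq).2).2))
    obtain ⟨hκρ, ⟨ha, hde⟩, hκ0, hκ1⟩ := heq
    have ha' : a = ξ ρ := by rw [← ha, hproj ρ]
    refine ⟨(o₁, o₂), ?_, ?_, ?_⟩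
    · rw [hd, hde]
    · rw [hκρ, hκ0, hκ1]
      rw [← ha']
      exact h1
    · rw [hκρ, hκ0, hκ1]
      rw [← ha']
      exact h2
  set cO : Pos → Option (Vec s₁) × Option (Vec s₂) := fun ρ =>
    if h : ∃ o, Pred ρ o then h.choose else (none, none) with hcO
  have hchoose : ∀ ρ : Pos, (∃ o, Pred ρ o) → Pred ρ (cO ρ) := by
    intro ρ hρ
    simp only [hcO, dif_pos hρ]
    exact hρ.choose_spec
  have hnone : ∀ ρ : Pos, (ζ ρ).2 = none → cO ρ = (none, none) := by
    intro ρ hρ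
    have : ¬ ∃ o, Pred ρ o := by
      rintro ⟨o, ho, -, -⟩
      rw [hρ] at ho
      exact absurd ho (by simp)
    simp only [hcO, dif_neg this]
  have hsome : ∀ ρ : Pos, (ζ ρ).2 ≠ none → Pred ρ (cO ρ) := by
    intro ρ hρ
    obtain ⟨d, hd⟩ := Option.ne_none_iff_exists'.mp hρ
    exact hchoose ρ (hex ρ d hd)
  set ζ₁ : Pos → σ × Option (Vec s₁) := fun ρ => (ξ ρ, (cO ρ).1) with hζ₁
  set ζ₂ : Pos → σ × Option (Vec s₂) := fun ρ => (ξ ρ, (cO ρ).2) with hζ₂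
  have hcoup : Coupled ζ ζ₁ ζ₂ := by
    intro ρ
    by_cases hc : (ζ ρ).2 = none
    · exact Or.inl ⟨hc, by simp [hζ₁, hnone ρ hc], by simp [hζ₂, hnone ρ hc]⟩
    · exact Or.inr (hsome ρ hc).1
  have hC := coupled_mem_C (A₁ := A₁) (A₂ := A₂) hcoup hfin
  haveI : Finite (prod A₁ A₂).Q := (prod A₁ A₂).finQ
  constructor
  · refine ⟨ζ₁, fun ρ => (κ ρ).1.1, fun ρ => rfl, ⟨?_, ?_, ?_⟩, ?_, ?_, ?_, ?_⟩
    · show (κ []).1.1 = A₁.qI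
      rw [hI]
      rfl
    · intro ρ d₁ hd₁
      simp only [hζ₁] at hd₁
      have hc : (ζ ρ).2 ≠ none := by
        intro hc
        rw [hnone ρ hc] at hd₁
        exact absurd hd₁ (by simp)
      have hpred := (hsome ρ hc).2.1
      rw [hd₁, stepRel_some] at hpred
      exact hpred
    · intro ρ hd₁
      simp only [hζ₁] at hd₁
      by_cases hc : (ζ ρ).2 = none
      · obtain ⟨p₁, p₂, a, r₁, r₂, t₁, t₂, heq, h1, h2⟩ := hω ρ hc
        replace heq := And.intro (Prod.mk.inj heq).1 (And.intro (Prod.mk.inj (Prod.mk.inj heq).2).1 (Prod.mk.inj (Prod.mk.inj (Prod.mk.inj heq).2).2))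
        obtain ⟨hκρ, ha, hκ0, hκ1⟩ := heq
        have ha' : a = ξ ρ := by rw [← ha, hproj ρ]
        show ((κ ρ).1.1, ξ ρ, (κ (ρ ++ [false])).1.1, (κ (ρ ++ [true])).1.1) ∈ A₁.Δω
        rw [hκρ, hκ0, hκ1, ← ha']
        exact h1
      · have hpred := (hsome ρ hc).2.1
        rw [hd₁, stepRel_none] at hpred
        exact hpred
    · exact hfin.subset hcoup.cnt₁_subset
    · intro hne
      exact ((hC.mp (hpar ⟨hne.choose, hcoup.cnt₁_subset hne.choose_spec⟩)).1) hne
    · intro ρ d₁ hd₁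
      simp only [hζ₁] at hd₁
      have hc : (ζ ρ).2 ≠ none := by
        intro hc
        rw [hnone ρ hc] at hd₁
        exact absurd hd₁ (by simp)
      have hpred := (hsome ρ hc).2.1
      rw [hd₁, stepRel_some] at hpred
      exact (A₁.hΔP _ hpred).2
    · intro π hπ
      have hmm := (hMul π hπ).2.1
      have heq : infOcc (fun i => (κ (π i)).1.1)
          = (fun q : (prod A₁ A₂).Q => q.1.1) '' infOcc (fun i => κ (π i)) :=
        infOcc_image (fun i => κ (π i)) (fun q : (prod A₁ A₂).Q => q.1.1)
      show infOcc (fun i => (κ (π i)).1.1) ∈ A₁.F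
      rw [heq]
      exact hmm
  · refine ⟨ζ₂, fun ρ => (κ ρ).1.2, fun ρ => rfl, ⟨?_, ?_, ?_⟩, ?_, ?_, ?_, ?_⟩
    · show (κ []).1.2 = A₂.qI
      rw [hI]
      rfl
    · intro ρ d₂ hd₂
      simp only [hζ₂] at hd₂
      have hc : (ζ ρ).2 ≠ none := by
        intro hc
        rw [hnone ρ hc] at hd₂
        exact absurd hd₂ (by simp)
      have hpred := (hsome ρ hc).2.2
      rw [hd₂, stepRel_some] at hpred
      exact hpred
    · intro ρ hd₂
      simp only [hζ₂] at hd₂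
      by_cases hc : (ζ ρ).2 = none
      · obtain ⟨p₁, p₂, a, r₁, r₂, t₁, t₂, heq, h1, h2⟩ := hω ρ hc
        replace heq := And.intro (Prod.mk.inj heq).1 (And.intro (Prod.mk.inj (Prod.mk.inj heq).2).1 (Prod.mk.inj (Prod.mk.inj (Prod.mk.inj heq).2).2))
        obtain ⟨hκρ, ha, hκ0, hκ1⟩ := heq
        have ha' : a = ξ ρ := by rw [← ha, hproj ρ]
        show ((κ ρ).1.2, ξ ρ, (κ (ρ ++ [false])).1.2, (κ (ρ ++ [true])).1.2) ∈ A₂.Δω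
        rw [hκρ, hκ0, hκ1, ← ha']
        exact h2
      · have hpred := (hsome ρ hc).2.2
        rw [hd₂, stepRel_none] at hpred
        exact hpred
    · exact hfin.subset hcoup.cnt₂_subset
    · intro hne
      exact ((hC.mp (hpar ⟨hne.choose, hcoup.cnt₂_subset hne.choose_spec⟩)).2) hne
    · intro ρ d₂ hd₂
      simp only [hζ₂] at hd₂
      have hc : (ζ ρ).2 ≠ none := by
        intro hc
        rw [hnone ρ hc] at hd₂
        exact absurd hd₂ (by simp)
      have hpred := (hsome ρ hc).2.2
      rw [hd₂, stepRel_some] at hpred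
      exact (A₂.hΔP _ hpred).2
    · intro π hπ
      have hmm := (hMul π hπ).2.2
      have heq : infOcc (fun i => (κ (π i)).1.2)
          = (fun q : (prod A₁ A₂).Q => q.1.2) '' infOcc (fun i => κ (π i)) :=
        infOcc_image (fun i => κ (π i)) (fun q : (prod A₁ A₂).Q => q.1.2)
      show infOcc (fun i => (κ (π i)).1.2) ∈ A₂.F
      rw [heq]
      exact hmm

end PMTAInter
/-- For any two PMTA over the same finite alphabet there is a PMTA recognizing the
intersection of their languages. -/
theorem pmta_intersection {σ : Type} [Fintype σ] {s₁ s₂ : ℕ}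
    (A₁ : PMTA σ s₁) (A₂ : PMTA σ s₂) :
    ∃ (s : ℕ) (A : PMTA σ s), A.Language = A₁.Language ∩ A₂.Language := by
  refine ⟨(s₁ + 1) + (s₂ + 1), PMTAInter.prod A₁ A₂, ?_⟩
  ext ξ
  constructor
  · intro h
    exact PMTAInter.backward h
  · rintro ⟨h₁, h₂⟩
    exact PMTAInter.forward h₁ h₂
end
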